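/- arXiv:math/0410321 — 5 statements merged into one kernel-verified Lean document; each statement's English description precedes it below -/
import Mathlib

section
/- Let F be a nonabelian free group. Then every nontrivial finitely generated normal subgroup of F has finite index in F. -/
namespace GreenbergAux

open FreeGroup List

variable {α : Type*} [DecidableEq α]

/-- A word is reduced iff no adjacent cancelling pair. -/
def IsRed (L : List (α × Bool)) : Prop :=
  List.Chain' (fun x y : α × Bool => ¬(x.1 = y.1 ∧ x.2 = !y.2)) L

theorem isRed_reduce (L : List (α × Bool)) : IsRed (reduce L) := by
  induction L with
  | nil => exact List.isChain_nil
  | cons x L ih =>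
    rw [reduce.cons]
    rcases h : reduce L with _ | ⟨y, L'⟩
    · exact List.isChain_singleton _
    · rw [h] at ih
      by_cases hc : x.1 = y.1 ∧ x.2 = !y.2
      · simp only [hc, if_true]
        exact ih.tail
      · simp only [hc, if_false]
        exact List.isChain_cons_cons.2 ⟨hc, ih⟩

theorem reduce_eq_self_of_isRed {L : List (α × Bool)} (h : IsRed L) : reduce L = L := by
  induction L with
  | nil => rfl
  | cons x L ih =>
    rw [reduce.cons]
    rcases hL : L with _ | ⟨y, L'⟩
    · rfl
    · have h' : IsRed L := h.tail
      rw [← hL, ih h', hL]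
      have hxy : ¬(x.1 = y.1 ∧ x.2 = !y.2) := (List.isChain_cons_cons.1 (hL ▸ h)).1
      simp only [hxy, if_false]

theorem isRed_toWord (x : FreeGroup α) : IsRed x.toWord := by
  rcases x with ⟨L⟩
  exact isRed_reduce L

omit [DecidableEq α] in
theorem invRev_cons (a : α × Bool) (L : List (α × Bool)) :
    invRev (a :: L) = invRev L ++ [(a.1, !a.2)] := by
  simp [invRev]

/-- Key cancellation lemma: multiplying two reduced words cancels a suffix of one
against a prefix of the other, with no other interaction. -/
theorem exists_cancel_aux (n : ℕ) : ∀ L₁ L₂ : List (α × Bool), L₁.length ≤ n →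
    IsRed L₁ → IsRed L₂ →
    ∃ c, c ≤ L₁.length ∧ c ≤ L₂.length ∧
      L₁.drop (L₁.length - c) = invRev (L₂.take c) ∧
      reduce (L₁ ++ L₂) = L₁.take (L₁.length - c) ++ L₂.drop c := by
  induction n with
  | zero =>
    intro L₁ L₂ hlen h₁ h₂
    have : L₁ = [] := List.length_eq_zero_iff.1 (Nat.le_zero.1 hlen)
    subst this
    exact ⟨0, by simp, by simp, by simp [invRev], by simpa using reduce_eq_self_of_isRed h₂⟩
  | succ n ih =>
    intro L₁ L₂ hlen h₁ h₂
    rcases List.eq_nil_or_concat' L₁ with rfl | ⟨M, x, rfl⟩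
    · exact ⟨0, by simp, by simp, by simp [invRev], by simpa using reduce_eq_self_of_isRed h₂⟩
    rcases L₂ with _ | ⟨y, M₂⟩
    · refine ⟨0, by simp, by simp, by simp [invRev], ?_⟩
      simp only [List.append_nil, Nat.sub_zero, List.take_length, List.drop_zero]
      exact reduce_eq_self_of_isRed h₁
    by_cases hcan : x.1 = y.1 ∧ x.2 = !y.2
    · -- cancellation at the junction
      have hy : y = (x.1, !x.2) := by
        obtain ⟨h1, h2⟩ := hcan
        have : y.2 = !x.2 := by rw [h2, Bool.not_not]
        exact Prod.ext h1.symm this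
      have hM : IsRed M := h₁.prefix ⟨[x], rfl⟩
      have hM₂ : IsRed M₂ := h₂.suffix ⟨[y], rfl⟩
      have hMlen : M.length ≤ n := by
        have := hlen; simp only [List.length_append, List.length_cons, List.length_nil] at this; omega
      obtain ⟨c, hc1, hc2, hc3, hc4⟩ := ih M M₂ hMlen hM hM₂
      have hred : reduce (M ++ [x] ++ (y :: M₂)) = reduce (M ++ M₂) := by
        have hstep : Red.Step (M ++ (x.1, x.2) :: (x.1, !x.2) :: M₂) (M ++ M₂) :=
          Red.Step.not
        have heq : M ++ [x] ++ (y :: M₂) = M ++ (x.1, x.2) :: (x.1, !x.2) :: M₂ := by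
          rw [hy]; simp
        rw [heq]
        exact reduce.Step.eq hstep
      have harith : (M ++ [x]).length - (c + 1) = M.length - c := by
        simp only [List.length_append, List.length_cons, List.length_nil]; omega
      have harith2 : M.length - c - M.length = 0 := by omega
      refine ⟨c + 1, ?_, ?_, ?_, ?_⟩
      · simp only [List.length_append, List.length_cons, List.length_nil]; omega
      · simp only [List.length_cons]; omega
      · rw [harith, List.drop_append, harith2, List.drop_zero,
          List.take_succ_cons, invRev_cons, hc3]
        congr 1
        rw [hy]
        simp
      · rw [hred, hc4, harith, List.take_append, harith2, List.take_zero,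
          List.append_nil, List.drop_succ_cons]
    · -- no cancellation: the concatenation is reduced
      refine ⟨0, by simp, by simp, by simp [invRev], ?_⟩
      simp only [Nat.sub_zero, List.take_length, List.drop_zero]
      apply reduce_eq_self_of_isRed
      refine List.isChain_append.2 ⟨h₁, h₂, ?_⟩
      intro a ha b hb
      rw [List.getLast?_concat] at ha
      simp only [List.head?_cons, Option.mem_def, Option.some.injEq] at ha hb
      subst ha; subst hb
      exact hcan

theorem norm_eq (x : FreeGroup α) : x.norm = x.toWord.length := rfl

theorem exists_cancel (x y : FreeGroup α) :
    ∃ c, c ≤ x.toWord.length ∧ c ≤ y.toWord.length ∧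
      x.toWord.drop (x.toWord.length - c) = invRev (y.toWord.take c) ∧
      (x * y).toWord = x.toWord.take (x.toWord.length - c) ++ y.toWord.drop c := by
  obtain ⟨c, h1, h2, h3, h4⟩ := exists_cancel_aux x.toWord.length x.toWord y.toWord le_rfl
    (isRed_toWord x) (isRed_toWord y)
  refine ⟨c, h1, h2, h3, ?_⟩
  have hxy : x * y = mk (x.toWord ++ y.toWord) := by rw [← mul_mk, mk_toWord, mk_toWord]
  rw [hxy, toWord_mk, h4]

omit [DecidableEq α] in
theorem invRev_take (L : List (α × Bool)) (c : ℕ) :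
    (invRev L).take c = invRev (L.drop (L.length - c)) := by
  simp only [invRev, List.take_reverse, List.length_map, List.map_drop]

/-- Quasiconvexity: a prefix of a product of short elements is close to a partial product. -/
theorem quasi (M : ℕ) (l : List (FreeGroup α)) (hl : ∀ s ∈ l, s.norm ≤ M)
    (p : List (α × Bool)) (hp : p <+: (l.prod).toWord) :
    ∃ l', l' <+: l ∧ ((l'.prod)⁻¹ * mk p).norm ≤ M := by
  induction l using List.reverseRecOn generalizing p with
  | nil =>
    refine ⟨[], List.prefix_refl _, ?_⟩
    simp only [List.prod_nil, toWord_one, List.prefix_nil] at hp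
    subst hp
    simp [norm_eq, ← one_eq_mk]
  | append_singleton l₀ s ih =>
    have hprod : (l₀ ++ [s]).prod = l₀.prod * s := by simp
    rw [hprod] at hp
    obtain ⟨c, hc1, hc2, hc3, hc4⟩ := exists_cancel l₀.prod s
    rw [hc4] at hp
    rcases le_or_gt p.length (l₀.prod.toWord.take (l₀.prod.toWord.length - c)).length with h | h
    · have hpA : p <+: l₀.prod.toWord.take (l₀.prod.toWord.length - c) :=
        List.prefix_of_prefix_length_le hp (List.prefix_append _ _) h
      have hpx : p <+: l₀.prod.toWord := hpA.trans (List.take_prefix _ _)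
      obtain ⟨l', hl', hb⟩ := ih (fun t ht => hl t (List.mem_append_left _ ht)) p hpx
      exact ⟨l', hl'.trans (List.prefix_append l₀ [s]), hb⟩
    · have hAp : l₀.prod.toWord.take (l₀.prod.toWord.length - c) <+: p :=
        List.prefix_of_prefix_length_le (List.prefix_append _ _) hp h.le
      obtain ⟨t, rfl⟩ := hAp
      have htB : t <+: s.toWord.drop c := (List.prefix_append_right_inj _).1 hp
      refine ⟨l₀, List.prefix_append _ _, ?_⟩
      have h1 : mk (l₀.prod.toWord.take (l₀.prod.toWord.length - c)) *
          mk (l₀.prod.toWord.drop (l₀.prod.toWord.length - c)) = l₀.prod := by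
        rw [mul_mk, List.take_append_drop, mk_toWord]
      have hxA : l₀.prod⁻¹ * mk (l₀.prod.toWord.take (l₀.prod.toWord.length - c)) =
          (mk (l₀.prod.toWord.drop (l₀.prod.toWord.length - c)))⁻¹ := by
        rw [eq_mul_inv_of_mul_eq h1, inv_mul_cancel_left]
      have h2 : l₀.prod⁻¹ * mk (l₀.prod.toWord.take (l₀.prod.toWord.length - c) ++ t) =
          (l₀.prod⁻¹ * mk (l₀.prod.toWord.take (l₀.prod.toWord.length - c))) * mk t := by
        rw [← mul_mk, mul_assoc]
      rw [h2, hxA]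
      calc ((mk (l₀.prod.toWord.drop (l₀.prod.toWord.length - c)))⁻¹ * mk t).norm
          ≤ ((mk (l₀.prod.toWord.drop (l₀.prod.toWord.length - c)))⁻¹).norm + (mk t).norm :=
            norm_mul_le _ _
        _ ≤ (l₀.prod.toWord.drop (l₀.prod.toWord.length - c)).length + t.length := by
            rw [norm_inv_eq]
            exact Nat.add_le_add norm_mk_le norm_mk_le
        _ ≤ c + (s.toWord.length - c) := by
            refine Nat.add_le_add ?_ ?_
            · rw [List.length_drop]; omega
            · have := htB.length_le
              rw [List.length_drop] at this
              exact this
        _ ≤ s.norm := by rw [norm_eq]; omega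
      exact hl s (List.mem_append_right _ (List.mem_singleton_self s))

/-- Cyclically reduced predicate on words. -/
def CycRed (L : List (α × Bool)) : Prop :=
  ∀ p ∈ L.head?, ∀ q ∈ L.getLast?, p ≠ (q.1, !q.2)

theorem exists_cycred_aux (N : Subgroup (FreeGroup α)) [hN : N.Normal] (n : ℕ) :
    ∀ u : FreeGroup α, u.toWord.length ≤ n → u ∈ N → u ≠ 1 →
    ∃ w ∈ N, w ≠ 1 ∧ CycRed w.toWord := by
  induction n with
  | zero =>
    intro u hlen hu hu1
    exact absurd (toWord_eq_nil_iff.1 (List.length_eq_zero_iff.1 (Nat.le_zero.1 hlen))) hu1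
  | succ n ih =>
    intro u hlen hu hu1
    rcases List.eq_nil_or_concat' u.toWord with h0 | ⟨M, b, hMb⟩
    · exact absurd (toWord_eq_nil_iff.1 h0) hu1
    rcases M with _ | ⟨a, mid⟩
    · -- singleton word is cyclically reduced
      refine ⟨u, hu, hu1, ?_⟩
      intro p hp q hq
      rw [hMb] at hp hq
      simp only [List.nil_append, List.head?_cons, List.getLast?_singleton,
        Option.mem_def, Option.some.injEq] at hp hq
      subst hp; subst hq
      intro hcontra
      simpa using congrArg Prod.snd hcontra
    by_cases hab : a = (b.1, !b.2)
    · -- peel the conjugating letter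
      have key : mk [b] * mk [a] = (1 : FreeGroup α) := by
        rw [mul_mk]
        have h2 : ([b] ++ [a] : List (α × Bool)) = [] ++ (b.1, b.2) :: (b.1, !b.2) :: [] := by
          simp [hab]
        rw [h2, one_eq_mk]
        have := Quot.sound (@Red.Step.not α [] [] b.1 b.2)
        rw [quot_mk_eq_mk, quot_mk_eq_mk] at this
        exact this
      have hu_split : u = mk [a] * mk mid * mk [b] := by
        rw [mul_mk, mul_mk]
        conv_lhs => rw [← mk_toWord (x := u), hMb]
        exact congrArg mk (by simp)
      have hv : (mk [a])⁻¹ * u * mk [a] = mk mid := by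
        rw [hu_split, mul_assoc (mk [a]) (mk mid) (mk [b]), inv_mul_cancel_left,
          mul_assoc, key, mul_one]
      have hvN : mk mid ∈ N := by
        rw [← hv]
        have := hN.conj_mem u hu (mk [a])⁻¹
        simpa [inv_inv] using this
      have hmidred : reduce mid = mid := by
        apply reduce_eq_self_of_isRed
        exact (isRed_toWord u).infix ⟨[a], [b], by rw [hMb]; simp⟩
      have hmid_ne : mid ≠ [] := by
        intro h
        subst h
        have hred := isRed_toWord u
        rw [hMb] at hred
        have : ¬(a.1 = b.1 ∧ a.2 = !b.2) := (List.isChain_cons_cons.1 hred).1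
        exact this (by rw [hab]; simp)
      have hlenmid : (mk mid).toWord.length ≤ n := by
        have : u.toWord.length = mid.length + 2 := by rw [hMb]; simp
        rw [toWord_mk, hmidred]
        omega
      have hne1 : mk mid ≠ 1 := by
        intro h
        have : (mk mid).toWord = [] := by rw [h, toWord_one]
        rw [toWord_mk, hmidred] at this
        exact hmid_ne this
      exact ih (mk mid) hlenmid hvN hne1
    · -- u itself is cyclically reduced
      refine ⟨u, hu, hu1, ?_⟩
      intro p hp q hq
      rw [hMb] at hp hq
      rw [List.getLast?_concat] at hq
      simp only [List.cons_append, List.head?_cons, Option.mem_def, Option.some.injEq] at hp hq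
      subst hp; subst hq
      exact hab

omit [DecidableEq α] in
theorem head?_invRev (L : List (α × Bool)) :
    (invRev L).head? = Option.map (fun q : α × Bool => (q.1, !q.2)) L.getLast? := by
  rw [invRev, List.head?_reverse, List.getLast?_map]

/-- Membership in a finitely generated subgroup gives a product-of-generators list. -/
theorem mem_list (N : Subgroup (FreeGroup α)) (S : Finset (FreeGroup α))
    (hS : Subgroup.closure (S : Set (FreeGroup α)) = N) (Mb : ℕ)
    (hMb : ∀ s ∈ S, s.norm ≤ Mb) {x : FreeGroup α} (hx : x ∈ N) :
    ∃ l : List (FreeGroup α), (∀ y ∈ l, y ∈ N ∧ y.norm ≤ Mb) ∧ l.prod = x := by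
  have hx' : x ∈ (Subgroup.closure (S : Set (FreeGroup α))).toSubmonoid := by
    rw [hS]; exact hx
  rw [Subgroup.closure_toSubmonoid] at hx'
  obtain ⟨l, hl, hprod⟩ := Submonoid.exists_list_of_mem_closure hx'
  refine ⟨l, fun y hy => ?_, hprod⟩
  rcases hl y hy with h | h
  · exact ⟨hS ▸ Subgroup.subset_closure h, hMb y h⟩
  · rw [Set.mem_inv] at h
    refine ⟨?_, ?_⟩
    · have : y⁻¹ ∈ N := hS ▸ Subgroup.subset_closure h
      simpa using N.inv_mem this
    · have := hMb y⁻¹ h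
      rwa [norm_inv_eq] at this

/-- Key lemma: every coset of `N` has a representative of bounded length. -/
theorem bounded_rep (N : Subgroup (FreeGroup α)) [hN : N.Normal]
    (S : Finset (FreeGroup α)) (hS : Subgroup.closure (S : Set (FreeGroup α)) = N)
    (Mb : ℕ) (hMb : ∀ s ∈ S, s.norm ≤ Mb)
    (w : FreeGroup α) (hw : w ∈ N) (hw1 : w ≠ 1) (hwc : CycRed w.toWord) :
    ∀ n (g : FreeGroup α), g.toWord.length ≤ n →
      ∃ g' : FreeGroup α, (QuotientGroup.mk g : FreeGroup α ⧸ N) = QuotientGroup.mk g' ∧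
        g'.toWord.length ≤ max Mb w.toWord.length := by
  set m := w.toWord.length with hm
  have hwne : w.toWord ≠ [] := fun h => hw1 (toWord_eq_nil_iff.1 h)
  have hm1 : 1 ≤ m := by
    rw [hm]
    exact Nat.pos_of_ne_zero fun h0 => hwne (List.length_eq_zero_iff.1 h0)
  intro n
  induction n with
  | zero =>
    intro g hg
    exact ⟨g, rfl, by omega⟩
  | succ n ih =>
    intro g hg
    by_cases hshort : g.toWord.length ≤ max Mb m
    · exact ⟨g, rfl, hshort⟩
    push_neg at hshort
    have hgm : m ≤ g.toWord.length := le_trans (le_max_right _ _) hshort.le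
    -- peel off a full w or w⁻¹ at the end of g, if present
    have hpeel : ∀ w' : FreeGroup α, w' ∈ N → w'.toWord.length = m →
        g.toWord.drop (g.toWord.length - m) = w'.toWord →
        ∃ g' : FreeGroup α, (QuotientGroup.mk g : FreeGroup α ⧸ N) = QuotientGroup.mk g' ∧
          g'.toWord.length ≤ max Mb m := by
      intro w' hw'N hw'm hdrop
      set g₁ := mk (g.toWord.take (g.toWord.length - m)) with hg₁
      have hg₁w : g₁ * w' = g := by
        conv_rhs => rw [← mk_toWord (x := g)]
        rw [hg₁, ← mk_toWord (x := w'), mul_mk, ← hdrop, List.take_append_drop]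
      have htw : g₁.toWord = g.toWord.take (g.toWord.length - m) := by
        rw [hg₁, toWord_mk]
        exact reduce_eq_self_of_isRed ((isRed_toWord g).prefix (List.take_prefix _ _))
      have hlen₁ : g₁.toWord.length ≤ n := by
        rw [htw, List.length_take]
        omega
      obtain ⟨g', hq, hb⟩ := ih g₁ hlen₁
      refine ⟨g', ?_, hb⟩
      rw [← hq, ← hg₁w]
      exact QuotientGroup.mk_mul_of_mem g₁ hw'N
    by_cases hA : g.toWord.drop (g.toWord.length - m) = w.toWord
    · exact hpeel w hw rfl hA
    by_cases hB : g.toWord.drop (g.toWord.length - m) = (w⁻¹).toWord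
    · exact hpeel w⁻¹ (N.inv_mem hw) (by rw [toWord_inv, invRev_length]) hB
    -- main case: conjugate w (or w⁻¹) by g and use quasiconvexity
    obtain ⟨P, x, hPx⟩ : ∃ P x, g.toWord = P ++ [x] := by
      rcases List.eq_nil_or_concat' g.toWord with h | ⟨P, x, h⟩
      · exfalso; rw [h] at hshort; simp at hshort
      · exact ⟨P, x, h⟩
    have hmain : ∀ v : FreeGroup α, v ∈ N → v.toWord.length = m →
        v.toWord ≠ g.toWord.drop (g.toWord.length - m) →
        v.toWord.head? ≠ some (x.1, !x.2) →
        ∃ g' : FreeGroup α, (QuotientGroup.mk g : FreeGroup α ⧸ N) = QuotientGroup.mk g' ∧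
          g'.toWord.length ≤ max Mb m := by
      intro v hvN hvm hvne hvhd
      -- step 1 : toWord (g * v) = g.toWord ++ v.toWord
      have hgv : (g * v).toWord = g.toWord ++ v.toWord := by
        have h1 : g * v = mk (g.toWord ++ v.toWord) := by
          rw [← mul_mk, mk_toWord, mk_toWord]
        rw [h1, toWord_mk]
        apply reduce_eq_self_of_isRed
        refine List.isChain_append.2 ⟨isRed_toWord g, isRed_toWord v, ?_⟩
        intro p hp q hq
        rw [hPx, List.getLast?_concat] at hp
        simp only [Option.mem_def, Option.some.injEq] at hp
        subst hp
        intro hxy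
        apply hvhd
        have hq' : v.toWord.head? = some q := hq
        rw [hq']
        have hq2 : q = (x.1, !x.2) := Prod.ext hxy.1.symm (by rw [hxy.2, Bool.not_not])
        rw [hq2]
      obtain ⟨c, hc1, hc2, hc3, hc4⟩ := exists_cancel (g * v) g⁻¹
      rw [hgv] at hc1 hc3 hc4
      rw [toWord_inv] at hc2 hc3 hc4
      rw [List.length_append, invRev_length, hvm] at *
      -- step 3 : c < m
      have hcm : c < m := by
        by_contra hcm
        push_neg at hcm
        apply hvne
        have h3 := congrArg (List.drop (c - m)) hc3
        rw [List.drop_drop, invRev_take, invRev_invRev, List.drop_drop] at h3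
        have e1 : g.toWord.length + m - c + (c - m) = g.toWord.length := by omega
        have e2 : g.toWord.length - c + (c - m) = g.toWord.length - m := by omega
        rw [e1, e2, List.drop_left] at h3
        exact h3
      -- step 4 : g.toWord is a prefix of toWord (g * v * g⁻¹)
      have hpre : g.toWord <+: (g * v * g⁻¹).toWord := by
        rw [hc4, List.take_append]
        have e3 : g.toWord.length + m - c ≥ g.toWord.length := by omega
        rw [List.take_of_length_le e3, List.append_assoc]
        exact List.prefix_append _ _
      have hconjN : g * v * g⁻¹ ∈ N := hN.conj_mem v hvN g
      obtain ⟨l, hl, hprod⟩ := mem_list N S hS Mb hMb hconjN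
      rw [← hprod] at hpre
      obtain ⟨l', hl', hbound⟩ := quasi Mb l (fun s hs => (hl s hs).2) g.toWord hpre
      rw [mk_toWord] at hbound
      have hx₀ : l'.prod ∈ N :=
        N.list_prod_mem fun y hy => (hl y (hl'.sublist.subset hy)).1
      refine ⟨l'.prod⁻¹ * g, ?_, ?_⟩
      · rw [QuotientGroup.eq]
        have := hN.conj_mem _ (N.inv_mem hx₀) g⁻¹
        simpa [mul_assoc] using this
      · rw [← norm_eq]
        exact le_trans hbound (le_max_left _ _)
    -- choose v among w, w⁻¹ with non-cancelling first letter
    by_cases hhd : w.toWord.head? = some (x.1, !x.2)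
    · -- use w⁻¹
      refine hmain w⁻¹ (N.inv_mem hw) (by rw [toWord_inv, invRev_length])
        (fun h => hB h.symm) ?_
      rw [toWord_inv, head?_invRev]
      obtain ⟨q, hq⟩ : ∃ q, w.toWord.getLast? = some q :=
        ⟨w.toWord.getLast hwne, List.getLast?_eq_getLast _⟩
      rw [hq]
      simp only [Option.map_some]
      intro hcontra
      have hinj : (q.1, !q.2) = ((x.1, !x.2) : α × Bool) := by injection hcontra
      rw [Prod.mk.injEq] at hinj
      have hq_eq : q = x := Prod.ext hinj.1 (Bool.not_inj hinj.2)
      have hcyc := hwc (x.1, !x.2) (by rw [hhd]; rfl) q hq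
      apply hcyc
      rw [hq_eq]
    · exact hmain w hw rfl (fun h => hA h.symm) hhd

/-- All letters appearing in elements of a subgroup generated by `S` appear in `S`. -/
theorem letters_mem (S : Finset (FreeGroup α)) (used : Finset α)
    (hused : ∀ s ∈ S, ∀ p ∈ s.toWord, p.1 ∈ used)
    {x : FreeGroup α} (hx : x ∈ Subgroup.closure (S : Set (FreeGroup α))) :
    ∀ p ∈ x.toWord, p.1 ∈ used := by
  induction hx using Subgroup.closure_induction with
  | mem s hs => exact hused s hs
  | one => intro p hp; rw [toWord_one] at hp; exact absurd hp List.not_mem_nil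
  | mul x y hx hy ihx ihy =>
    intro p hp
    have := (toWord_mul_sublist x y).subset hp
    rcases List.mem_append.1 this with h | h
    · exact ihx p h
    · exact ihy p h
  | inv x hx ihx =>
    intro p hp
    rw [toWord_inv, invRev] at hp
    rw [List.mem_reverse, List.mem_map] at hp
    obtain ⟨q, hq, rfl⟩ := hp
    exact ihx q hq

theorem infinite_case [Infinite α] (N : Subgroup (FreeGroup α)) [hN : N.Normal]
    (S : Finset (FreeGroup α)) (hS : Subgroup.closure (S : Set (FreeGroup α)) = N)
    (u : FreeGroup α) (hu : u ∈ N) (hu1 : u ≠ 1) : False := by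
  classical
  set used : Finset α := S.sup (fun s => (s.toWord.map Prod.fst).toFinset) with hused
  have husedS : ∀ s ∈ S, ∀ p ∈ s.toWord, p.1 ∈ used := by
    intro s hs p hp
    refine Finset.mem_of_subset (Finset.le_sup hs) ?_
    rw [List.mem_toFinset, List.mem_map]
    exact ⟨p, hp, rfl⟩
  have hlet : ∀ x ∈ N, ∀ p ∈ x.toWord, p.1 ∈ used := by
    intro x hx
    exact letters_mem S used husedS (hS ▸ hx)
  obtain ⟨t, ht⟩ := Infinite.exists_notMem_finset used
  have hconj : of t * u * (of t)⁻¹ ∈ N := hN.conj_mem u hu (of t)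
  -- compute the reduced word of the conjugate
  have hofmk : (of t : FreeGroup α) = mk [(t, true)] := rfl
  have hofmk' : (of t : FreeGroup α)⁻¹ = mk [(t, false)] := by
    rw [← mk_toWord (x := (of t)⁻¹), toWord_inv, toWord_of]
    simp [invRev]
  have hword : (of t * u * (of t)⁻¹).toWord = (t, true) :: u.toWord ++ [(t, false)] := by
    have h1 : of t * u * (of t)⁻¹ = mk ([(t, true)] ++ u.toWord ++ [(t, false)]) := by
      rw [hofmk', hofmk]
      conv_lhs => rw [← mk_toWord (x := u)]
      rw [mul_mk, mul_mk]
    rw [h1, toWord_mk]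
    have : ([(t, true)] ++ u.toWord ++ [(t, false)] : List (α × Bool)) =
        (t, true) :: u.toWord ++ [(t, false)] := by simp
    rw [this]
    apply reduce_eq_self_of_isRed
    obtain ⟨hd, tl, hu'⟩ : ∃ hd tl, u.toWord = hd :: tl := by
      rcases hu'' : u.toWord with _ | ⟨hd, tl⟩
      · exact absurd (toWord_eq_nil_iff.1 hu'') hu1
      · exact ⟨hd, tl, rfl⟩
    have hhd : hd.1 ∈ used := hlet u hu hd (by rw [hu']; exact List.mem_cons_self)
    have hBC : IsRed (u.toWord ++ [(t, false)]) := by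
      refine List.isChain_append.2 ⟨isRed_toWord u, List.isChain_singleton _, ?_⟩
      intro p hp q hq
      simp only [List.head?_cons, Option.mem_def, Option.some.injEq] at hq
      subst hq
      have hpB : p ∈ u.toWord := by
        obtain ⟨h, rfl⟩ := List.mem_getLast?_eq_getLast hp
        exact List.getLast_mem h
      intro hcon
      have hpt : p.1 = t := hcon.1
      exact ht (by rw [← hpt]; exact hlet u hu p hpB)
    have : ((t, true) :: u.toWord ++ [(t, false)] : List (α × Bool)) =
        [(t, true)] ++ (u.toWord ++ [(t, false)]) := by simp
    rw [this]
    refine List.isChain_append.2 ⟨List.isChain_singleton _, hBC, ?_⟩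
    intro p hp q hq
    simp only [List.getLast?_singleton, Option.mem_def, Option.some.injEq] at hp
    subst hp
    have hq' : q = hd := by
      rw [hu'] at hq
      simp only [List.cons_append, List.head?_cons, Option.mem_def, Option.some.injEq] at hq
      exact hq.symm
    intro hcon
    have hhd' : q.1 ∈ used := by rw [hq']; exact hhd
    have hpt : t = q.1 := hcon.1
    exact ht (by rw [hpt]; exact hhd')
  have hmem : (t, true) ∈ (of t * u * (of t)⁻¹).toWord := by
    rw [hword]
    exact List.mem_cons_self
  exact ht (hlet _ hconj (t, true) hmem)

end GreenbergAux

/-- Greenberg: every nontrivial finitely generated normal subgroup of a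
nonabelian free group has finite index. -/
theorem stmt_0 {α : Type*} [Nontrivial α]
    (N : Subgroup (FreeGroup α)) [N.Normal] (hfg : N.FG) (hne : N ≠ ⊥) :
    N.FiniteIndex := by
  letI := Classical.decEq α
  obtain ⟨S, hS⟩ := hfg
  obtain ⟨u0, hu0⟩ := Subgroup.ne_bot_iff_exists_ne_one.1 hne
  have huN : (u0 : FreeGroup α) ∈ N := u0.2
  have hu1 : (u0 : FreeGroup α) ≠ 1 := fun h => hu0 (Subtype.ext h)
  cases finite_or_infinite α with
  | inr hinf => exact (GreenbergAux.infinite_case N S hS u0 huN hu1).elim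
  | inl hfinα =>
    obtain ⟨w, hwN, hw1, hwc⟩ := GreenbergAux.exists_cycred_aux N
      (u0 : FreeGroup α).toWord.length u0 le_rfl huN hu1
    set Mb := S.sup FreeGroup.norm with hMbdef
    have hMb : ∀ s ∈ S, s.norm ≤ Mb := fun s hs => Finset.le_sup hs
    set C := max Mb w.toWord.length with hC
    have hfinlist : {l : List (α × Bool) | l.length ≤ C}.Finite :=
      List.finite_length_le _ _
    haveI := hfinlist.to_subtype
    haveI hfin : Finite {x : FreeGroup α // x.toWord.length ≤ C} := by
      refine Finite.of_injective (fun x : {x : FreeGroup α // x.toWord.length ≤ C} =>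
        (⟨x.1.toWord, x.2⟩ : {l : List (α × Bool) | l.length ≤ C})) ?_
      intro a b h
      exact Subtype.ext (FreeGroup.toWord_injective (congrArg Subtype.val h))
    have hsurj : Function.Surjective
        (fun x : {x : FreeGroup α // x.toWord.length ≤ C} =>
          (QuotientGroup.mk x.1 : FreeGroup α ⧸ N)) := by
      intro q
      obtain ⟨g, rfl⟩ := QuotientGroup.mk_surjective q
      obtain ⟨g', hq, hb⟩ := GreenbergAux.bounded_rep N S hS Mb hMb w hwN hw1 hwc
        g.toWord.length g le_rfl
      exact ⟨⟨g', hb⟩, hq.symm⟩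
    haveI : Finite (FreeGroup α ⧸ N) := Finite.of_surjective _ hsurj
    exact N.finiteIndex_of_finite_quotient
end

section
/- Finitely generated free groups are Hopfian: every surjective endomorphism of a free group of finite rank is an isomorphism. -/
theorem exists_perm_extend {α : Type*} [Finite α] (f : α → α) (s : Set α)
    (h : Set.InjOn f s) : ∃ σ : Equiv.Perm α, ∀ x ∈ s, σ x = f x := by
  classical
  have : Fintype α := Fintype.ofFinite α
  let e : s ≃ (f '' s : Set α) := (h.bijOn_image).equiv f
  have hc : Fintype.card (sᶜ : Set α) = Fintype.card ((f '' s)ᶜ : Set α) := by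
    rw [Fintype.card_compl_set, Fintype.card_compl_set, Fintype.card_congr e]
  have e' : (sᶜ : Set α) ≃ ((f '' s)ᶜ : Set α) := Fintype.equivOfCardEq hc
  refine ⟨((Equiv.Set.sumCompl s).symm.trans ((e.sumCongr e').trans
    (Equiv.Set.sumCompl (f '' s)))), fun x hx => ?_⟩
  simp only [Equiv.trans_apply, Equiv.Set.sumCompl_symm_apply_of_mem hx,
    Equiv.sumCongr_apply, Sum.map_inl, Equiv.Set.sumCompl_apply_inl]
  rfl

theorem free_group_separate {n : ℕ} (w : FreeGroup (Fin n)) (hw : w ≠ 1) :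
    ∃ (N : ℕ) (f : FreeGroup (Fin n) →* Equiv.Perm (Fin N)), f w ≠ 1 := by
  classical
  set l := w.toWord with hl
  have hred : FreeGroup.reduce l = l := FreeGroup.reduce_toWord w
  have hnil : l ≠ [] := fun h => hw (FreeGroup.toWord_eq_nil_iff.mp h)
  have hL0 : 0 < l.length := List.length_pos_iff.mpr hnil
  set L := l.length with hL
  -- no adjacent cancelling pair in a reduced word
  have nocancel : ∀ (k : ℕ) (a : Fin n) (b : Bool),
      l[k]? = some (a, b) → l[k+1]? = some (a, !b) → False := by
    intro k a b h1 h2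
    have hk1 : k + 1 < L := (List.getElem?_eq_some_iff.mp h2).1
    have hk : k < L := Nat.lt_of_succ_lt hk1
    have e1 : l[k] = (a, b) := by
      have h3 := List.getElem?_eq_getElem hk; rw [h1] at h3
      exact (Option.some.inj h3).symm
    have e2 : l[k+1] = (a, !b) := by
      have h3 := List.getElem?_eq_getElem hk1; rw [h2] at h3
      exact (Option.some.inj h3).symm
    have hdecomp : l = l.take k ++ (a, b) :: (a, !b) :: l.drop (k+2) := by
      conv_lhs => rw [← List.take_append_drop k l]
      congr 1
      rw [List.drop_eq_getElem_cons hk, e1, List.drop_eq_getElem_cons hk1, e2]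
    exact FreeGroup.reduce.not (hred.trans hdecomp)
  -- construct, for each generator, a permutation of `Fin (L+1)`
  have key : ∀ a : Fin n, ∃ σ : Equiv.Perm (Fin (L+1)),
      (∀ k : ℕ, ∀ hk : k < L, l[k] = (a, false) →
        σ ⟨k, Nat.lt_succ_of_lt hk⟩ = ⟨k+1, Nat.succ_lt_succ hk⟩) ∧
      (∀ k : ℕ, ∀ hk : k < L, l[k] = (a, true) →
        σ ⟨k+1, Nat.succ_lt_succ hk⟩ = ⟨k, Nat.lt_succ_of_lt hk⟩) := by
    intro a
    set up : Fin (L+1) → Prop := fun k => l[(k:ℕ)]? = some (a, false) with hup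
    set dn : Fin (L+1) → Prop := fun k =>
      0 < (k:ℕ) ∧ l[(k:ℕ)-1]? = some (a, true) with hdn
    have hex : ∀ k, up k → dn k → False := by
      rintro k h1 ⟨hk0, h2⟩
      have : (k:ℕ) - 1 + 1 = (k:ℕ) := Nat.succ_pred_eq_of_pos hk0
      exact nocancel ((k:ℕ)-1) a true h2 (by rw [this]; exact h1)
    have hub : ∀ k : Fin (L+1), up k → (k:ℕ) + 1 < L + 1 := by
      intro k h; exact Nat.succ_lt_succ (List.getElem?_eq_some_iff.mp h).1
    set F : Fin (L+1) → Fin (L+1) := fun k =>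
      if h : up k then ⟨(k:ℕ)+1, hub k h⟩
      else if h2 : dn k then ⟨(k:ℕ)-1, lt_of_le_of_lt (Nat.sub_le _ _) k.isLt⟩
      else k with hF
    set S : Set (Fin (L+1)) := {k | up k ∨ dn k} with hS
    have hFup : ∀ k (h : up k), F k = ⟨(k:ℕ)+1, hub k h⟩ := by
      intro k h; simp only [hF, dif_pos h]
    have hFdn : ∀ k (h : dn k), F k = ⟨(k:ℕ)-1, lt_of_le_of_lt (Nat.sub_le _ _) k.isLt⟩ := by
      intro k h
      have : ¬ up k := fun h' => hex k h' h
      simp only [hF, dif_neg this, dif_pos h]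
    have hinj : Set.InjOn F S := by
      rintro x (hx | hx) y (hy | hy) hxy
      · rw [hFup x hx, hFup y hy] at hxy
        have hxy' := Fin.mk.inj_iff.mp hxy
        exact Fin.ext (by omega)
      · rw [hFup x hx, hFdn y hy] at hxy
        have hxy' : (x:ℕ) + 1 = (y:ℕ) - 1 := Fin.mk.inj_iff.mp hxy
        exfalso
        refine nocancel (x:ℕ) a false hx ?_
        rw [show (x:ℕ)+1 = (y:ℕ)-1 from hxy']
        exact hy.2
      · rw [hFdn x hx, hFup y hy] at hxy
        have hxy' : (x:ℕ) - 1 = (y:ℕ) + 1 := Fin.mk.inj_iff.mp hxy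
        exfalso
        refine nocancel (y:ℕ) a false hy ?_
        rw [show (y:ℕ)+1 = (x:ℕ)-1 from hxy'.symm]
        exact hx.2
      · rw [hFdn x hx, hFdn y hy] at hxy
        have hxy' : (x:ℕ) - 1 = (y:ℕ) - 1 := Fin.mk.inj_iff.mp hxy
        have := hx.1; have := hy.1
        exact Fin.ext (by omega)
    obtain ⟨σ, hσ⟩ := exists_perm_extend F S hinj
    refine ⟨σ, fun k hk hke => ?_, fun k hk hke => ?_⟩
    · have hu : up ⟨k, Nat.lt_succ_of_lt hk⟩ := by
        simp only [hup]
        rw [List.getElem?_eq_getElem hk, hke]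
      rw [hσ _ (Or.inl hu), hFup _ hu]
    · have hd : dn ⟨k+1, Nat.succ_lt_succ hk⟩ := by
        refine ⟨Nat.succ_pos k, ?_⟩
        simp only [Nat.add_sub_cancel]
        rw [List.getElem?_eq_getElem hk, hke]
      rw [hσ _ (Or.inr hd), hFdn _ hd]
      rfl
  choose σ hσ1 hσ2 using key
  -- the key computation
  have main : ∀ (m : List (Fin n × Bool)), ∀ (j : ℕ), ∀ hj : j + m.length = L,
      m = l.drop j →
      (List.prod (m.map fun x => cond x.2 (σ x.1) (σ x.1)⁻¹)) ⟨L, Nat.lt_succ_self L⟩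
        = ⟨j, by omega⟩ := by
    intro m
    induction m with
    | nil =>
      intro j hj _
      simp only [List.length_nil, Nat.add_zero] at hj
      subst hj
      simp
    | cons p m ih =>
      intro j hj hdrop
      have hjL : j < L := by simp only [List.length_cons] at hj; omega
      rw [List.drop_eq_getElem_cons hjL] at hdrop
      obtain ⟨hp, hm⟩ := List.cons_eq_cons.mp hdrop
      obtain ⟨a, b⟩ := p
      have hIH := ih (j+1) (by simp only [List.length_cons] at hj; omega) hm
      simp only [List.map_cons, List.prod_cons, Equiv.Perm.mul_apply]
      rw [hIH]
      cases b with
      | true =>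
        have := hσ2 a j hjL hp.symm
        simpa using this
      | false =>
        have h1 := hσ1 a j hjL hp.symm
        simp only [cond_false]
        have : (⟨j+1, by omega⟩ : Fin (L+1)) = σ a ⟨j, by omega⟩ := by rw [h1]
        rw [this, Equiv.Perm.inv_def, Equiv.symm_apply_apply]
  refine ⟨L+1, FreeGroup.lift σ, fun hcon => ?_⟩
  have h0 : (FreeGroup.lift σ) w ⟨L, Nat.lt_succ_self L⟩ = ⟨0, Nat.succ_pos L⟩ := by
    conv_lhs => rw [← FreeGroup.mk_toWord (x := w)]
    rw [FreeGroup.lift_mk]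
    exact main l 0 (by simp [hL]) rfl
  rw [hcon] at h0
  have := Fin.mk.inj_iff.mp h0
  omega

/-- Finitely generated free groups are Hopfian. -/
theorem stmt_2 (n : ℕ) (φ : FreeGroup (Fin n) →* FreeGroup (Fin n))
    (hφ : Function.Surjective φ) : Function.Injective φ := by
  rw [injective_iff_map_eq_one]
  intro g hg
  by_contra hg1
  obtain ⟨N, f, hf⟩ := free_group_separate g hg1
  have : Finite (FreeGroup (Fin n) →* Equiv.Perm (Fin N)) :=
    Finite.of_equiv _ (FreeGroup.lift)
  have hinj : Function.Injective
      (fun ψ : FreeGroup (Fin n) →* Equiv.Perm (Fin N) => ψ.comp φ) :=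
    fun ψ₁ ψ₂ h => (MonoidHom.cancel_right hφ).mp h
  obtain ⟨ψ, hψ⟩ := (Finite.injective_iff_surjective.mp hinj) f
  apply hf
  have : f g = ψ (φ g) := by rw [← hψ]; rfl
  rw [this, hg, map_one]
end

section
/- Let G be a finitely generated group admitting a surjective homomorphism χ : G → ℤ with finitely generated kernel, and suppose the abelianization of G is isomorphic to ℤⁿ × T with T finite and n ≥ 2. Then there is no surjective homomorphism from G onto the free group F_n of rank n. (In the paper's language: a fibred 3-manifold group has co-rank strictly less than its first Betti number when that Betti number is at least 2.) -/
open Multiplicative SemidirectProduct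

namespace Stmt9Aux

abbrev R := AddMonoidAlgebra ℤ ℤ

/-- `AddAut` to `MulAut` of `Multiplicative` as a monoid hom. -/
def autMult (A : Type*) [AddGroup A] : Multiplicative (AddAut A) →* MulAut (Multiplicative A) where
  toFun e := AddEquiv.toMultiplicative e.toAdd
  map_one' := rfl
  map_mul' _ _ := rfl

/-- shift action of ℤ on the lamp group `Multiplicative R` -/
noncomputable def shiftHom : Multiplicative ℤ →* MulAut (Multiplicative R) :=
  (autMult R).comp ((DistribMulAction.toAddAut Rˣ R).comp
    (AddMonoidAlgebra.of ℤ ℤ).toHomUnits)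

lemma shiftHom_apply (k : Multiplicative ℤ) (f : Multiplicative R) :
    toAdd (shiftHom k f) = AddMonoidAlgebra.single k.toAdd 1 * toAdd f := rfl

lemma shiftHom_inv_apply (k : Multiplicative ℤ) (f : Multiplicative R) :
    toAdd ((shiftHom k)⁻¹ f) = AddMonoidAlgebra.single (-k.toAdd) 1 * toAdd f := by
  rw [← map_inv]
  exact shiftHom_apply _ _

abbrev Q := SemidirectProduct (Multiplicative R) (Multiplicative ℤ) shiftHom

end Stmt9Aux

namespace Stmt9Aux

noncomputable def phiF {n : ℕ} (ψ : FreeGroup (Fin n) →* Multiplicative ℤ) (i : Fin n) :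
    FreeGroup (Fin n) →* Q :=
  FreeGroup.lift (fun l => inl (ofAdd (if l = i then AddMonoidAlgebra.single 0 1 else 0))
    * inr (ψ (FreeGroup.of l)))

lemma right_phiF {n : ℕ} (ψ : FreeGroup (Fin n) →* Multiplicative ℤ) (i : Fin n)
    (w : FreeGroup (Fin n)) : (phiF ψ i w).right = ψ w := by
  have : rightHom.comp (phiF ψ i) = ψ := by
    apply FreeGroup.ext_hom
    intro l
    simp [phiF]
  have h2 := DFunLike.congr_fun this w
  simpa [rightHom] using h2

end Stmt9Aux

namespace Stmt9Aux

lemma conj_left {p q : Q} (hq : q.right = 1) :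
    (p * q * p⁻¹).left = shiftHom p.right q.left := by
  simp only [mul_left, mul_right, inv_left, inv_right, hq, mul_one, map_inv]
  simp only [MulAut.inv_def, MulEquiv.apply_symm_apply]
  simp [mul_comm, mul_assoc, mul_left_comm]

theorem ker_not_fg {n : ℕ} (hn : 2 ≤ n) (ψ : FreeGroup (Fin n) →* Multiplicative ℤ)
    (hs : Function.Surjective ψ) : ¬ ψ.ker.FG := by
  intro hfg
  -- a generator with nonzero image
  have hj : ∃ j : Fin n, ψ (FreeGroup.of j) ≠ 1 := by
    by_contra h
    push_neg at h
    have hone : ψ = 1 := FreeGroup.ext_hom _ _ (by simp [h])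
    obtain ⟨x, hx⟩ := hs (ofAdd 1)
    rw [hone] at hx
    exact one_ne_zero (by exact_mod_cast congrArg toAdd hx.symm)
  obtain ⟨j, hj⟩ := hj
  obtain ⟨i, hij⟩ : ∃ i : Fin n, i ≠ j := by
    have : 1 < Fintype.card (Fin n) := by rw [Fintype.card_fin]; omega
    exact Fintype.exists_ne_of_one_lt_card this j
  set Φ := phiF ψ i with hΦ
  set c : FreeGroup (Fin n) → R := fun w => toAdd ((Φ w).left) with hc
  -- additivity of c on the kernel
  have hadd : ∀ u v : FreeGroup (Fin n), ψ u = 1 → c (u * v) = c u + c v := by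
    intro u v hu
    have : (Φ (u * v)).left = (Φ u).left * shiftHom (Φ u).right (Φ v).left := by
      rw [map_mul]; rfl
    rw [hc]; simp only [this]
    simp only [this, hΦ, right_phiF, hu, map_one, MulAut.one_apply, toAdd_mul]
  have hinv : ∀ u : FreeGroup (Fin n), ψ u = 1 → c u⁻¹ = - c u := by
    intro u hu
    have : (Φ u⁻¹).left = shiftHom (Φ u).right⁻¹ (Φ u).left⁻¹ := by
      rw [map_inv]; rfl
    rw [hc]; simp only [this]
    simp only [this, hΦ, right_phiF, hu, inv_one, map_one, MulAut.one_apply, toAdd_inv]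
  have hone : c 1 = 0 := by simp [hc]
  -- conjugation shifts c
  have hconj : ∀ g u : FreeGroup (Fin n), ψ u = 1 →
      c (g * u * g⁻¹) = AddMonoidAlgebra.single (ψ g).toAdd 1 * c u := by
    intro g u hu
    have h1 : (Φ (g * u * g⁻¹)).left = shiftHom (Φ g).right (Φ u).left := by
      rw [map_mul, map_mul, map_inv]
      exact conj_left (by rw [right_phiF]; exact hu)
    rw [hc]; simp only [h1]
    simp only [h1, hΦ, right_phiF]
    rw [shiftHom_apply]
  -- the commutator element
  set u0 := FreeGroup.of i * FreeGroup.of j * (FreeGroup.of i)⁻¹ * (FreeGroup.of j)⁻¹ with hu0def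
  have hcomm1 : ∀ x y : Multiplicative ℤ, x * y * x⁻¹ * y⁻¹ = 1 := fun x y => by
    rw [mul_comm x y]; group
  have hu0 : ψ u0 = 1 := by
    simp only [hu0def, map_mul, map_inv]
    exact hcomm1 _ _
  set aj := (ψ (FreeGroup.of j)).toAdd with haj_def
  have haj : aj ≠ 0 := by
    intro h
    exact hj (by rw [← ofAdd_toAdd (ψ (FreeGroup.of j)), ← haj_def, h]; rfl)
  have hcu0 : c u0 = AddMonoidAlgebra.single 0 1 - AddMonoidAlgebra.single aj 1 := by
    simp [hc, hΦ, hu0def, phiF, mul_left, mul_right, inv_left, inv_right, shiftHom_apply,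
      Ne.symm hij]
    rw [← MulAut.inv_def, shiftHom_inv_apply]
    simp only [toAdd_ofAdd, mul_one]
    rw [show (AddMonoidAlgebra.single (-(toAdd (ψ (FreeGroup.of i)))) (1:ℤ) : R) =
        LaurentPolynomial.T (-(toAdd (ψ (FreeGroup.of i)))) from rfl,
      ← LaurentPolynomial.T_add,
      show -(toAdd (ψ (FreeGroup.of i))) + (toAdd (ψ (FreeGroup.of j))
        + toAdd (ψ (FreeGroup.of i))) = aj by rw [haj_def]; ring,
      sub_eq_add_neg]
  -- the finitely generated kernel bounds supports
  obtain ⟨S, hS⟩ := hfg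
  set M : Finset ℤ := S.sup fun s => (c s).coeff.support with hM
  let P : Subgroup (FreeGroup (Fin n)) :=
    { carrier := {w | ψ w = 1 ∧ ∀ x : ℤ, x ∉ M → (c w).coeff x = 0}
      one_mem' := ⟨map_one ψ, fun x _ => by rw [hone]; rfl⟩
      mul_mem' := by
        rintro u v ⟨hu1, hu2⟩ ⟨hv1, hv2⟩
        refine ⟨by simp [map_mul, hu1, hv1], fun x hx => ?_⟩
        rw [hadd u v hu1, AddMonoidAlgebra.coeff_add, Finsupp.add_apply, hu2 x hx, hv2 x hx, add_zero]
      inv_mem' := by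
        rintro u ⟨hu1, hu2⟩
        refine ⟨by simp [map_inv, hu1], fun x hx => ?_⟩
        rw [hinv u hu1, AddMonoidAlgebra.coeff_neg, Finsupp.neg_apply, hu2 x hx, neg_zero] }
  have hle : ψ.ker ≤ P := by
    rw [← hS]
    refine (Subgroup.closure_le P).2 ?_
    intro s hsS
    have hsker : s ∈ ψ.ker := hS ▸ Subgroup.subset_closure hsS
    refine ⟨MonoidHom.mem_ker.1 hsker, fun x hx => ?_⟩
    by_contra hne
    exact hx (Finset.le_sup (f := fun s => (c s).coeff.support) hsS (Finsupp.mem_support_iff.2 hne))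
  obtain ⟨k, hk⟩ := Infinite.exists_notMem_finset M
  obtain ⟨g, hg⟩ := hs (ofAdd k)
  have hu1ker : ψ (g * u0 * g⁻¹) = 1 := by simp [map_mul, map_inv, hu0]
  have hcu1 : c (g * u0 * g⁻¹) = AddMonoidAlgebra.single k 1 * c u0 := by
    rw [hconj g u0 hu0, hg, toAdd_ofAdd]
  have hval : (c (g * u0 * g⁻¹)).coeff k = 1 := by
    rw [hcu1, hcu0, mul_sub]
    rw [show (AddMonoidAlgebra.single k 1 * AddMonoidAlgebra.single 0 1 : R)
        = AddMonoidAlgebra.single (k + 0) 1 by rw [AddMonoidAlgebra.single_mul_single]; norm_num]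
    rw [show (AddMonoidAlgebra.single k 1 * AddMonoidAlgebra.single aj 1 : R)
        = AddMonoidAlgebra.single (k + aj) 1 by rw [AddMonoidAlgebra.single_mul_single]; norm_num]
    rw [AddMonoidAlgebra.coeff_sub, Finsupp.sub_apply]
    rw [AddMonoidAlgebra.coeff_single, AddMonoidAlgebra.coeff_single, Finsupp.single_apply, Finsupp.single_apply]
    simp [haj]
  have hmem := hle (MonoidHom.mem_ker.2 hu1ker)
  have hzero : (c (g * u0 * g⁻¹)).coeff k = 0 := hmem.2 k hk
  rw [hzero] at hval
  exact one_ne_zero hval.symm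

end Stmt9Aux

namespace Stmt9Aux

lemma torsion_hom_trivial {T M : Type*} [Group T] [Finite T] [AddCommGroup M]
    (hM : ∀ (m : ℕ) (x : M), 0 < m → m • x = 0 → x = 0)
    (f : T →* Multiplicative M) (t : T) : f t = 1 := by
  have h1 : (f t) ^ (Nat.card T) = 1 := by rw [← map_pow, pow_card_eq_one']; exact map_one f
  have h2 : (Nat.card T) • (f t).toAdd = 0 := by
    have := congrArg toAdd h1
    simpa using this
  have h3 := hM _ _ Nat.card_pos h2
  rw [← ofAdd_toAdd (f t), h3]
  rfl

lemma nsmul_int (m : ℕ) (x : ℤ) (hm : 0 < m) (h : m • x = 0) : x = 0 := by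
  have : (m : ℤ) * x = 0 := by rwa [← nsmul_eq_mul]
  rcases mul_eq_zero.1 this with h' | h'
  · exact absurd (by exact_mod_cast h') (by positivity)
  · exact h'

lemma nsmul_pi {n : ℕ} (m : ℕ) (x : Fin n → ℤ) (hm : 0 < m) (h : m • x = 0) : x = 0 := by
  funext l
  have : m • x l = 0 := congrFun h l
  exact nsmul_int m (x l) hm this

end Stmt9Aux

/-- A fibred group (surjection to ℤ with f.g. kernel) with first Betti
number n ≥ 2 cannot surject onto the free group of rank n. -/
theorem stmt_9 {G : Type*} [Group G] [Group.FG G] (n : ℕ) (hn : 2 ≤ n)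
    (T : Type*) [CommGroup T] [Finite T]
    (e : Abelianization G ≃* Multiplicative (Fin n → ℤ) × T)
    (χ : G →* Multiplicative ℤ) (hχ : Function.Surjective χ)
    (hker : χ.ker.FG) :
    ¬ ∃ θ : G →* FreeGroup (Fin n), Function.Surjective θ := by
  rintro ⟨θ, hθ⟩
  classical
  set A := Multiplicative (Fin n → ℤ) with hA
  set p : FreeGroup (Fin n) →* A := FreeGroup.lift fun l => ofAdd (Pi.single l 1) with hpdef
  have hpof : ∀ l, p (FreeGroup.of l) = ofAdd (Pi.single l 1) := fun l => FreeGroup.lift_apply_of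
  have hp : Function.Surjective p := by
    have h1 : ∀ l : Fin n, ∀ m : ℤ, ofAdd (Pi.single l m) ∈ p.range := by
      intro l m
      refine ⟨(FreeGroup.of l) ^ m, ?_⟩
      rw [map_zpow, hpof l, ← ofAdd_zsmul]
      congr 1
      funext y
      simp [Pi.single_apply]
    intro x
    have h2 : x = ∏ l : Fin n, ofAdd (Pi.single l (x.toAdd l)) := by
      rw [← ofAdd_sum, Finset.univ_sum_single, ofAdd_toAdd]
    rw [h2]
    exact Subgroup.prod_mem _ fun l _ => h1 l (x.toAdd l)
  set α : Abelianization G →* A := Abelianization.lift (p.comp θ) with hαdef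
  set α' : A × T →* A := α.comp e.symm.toMonoidHom with hα'def
  set β : A →* A := α'.comp (MonoidHom.inl A T) with hβdef
  have hTA : ∀ t : T, α' (1, t) = 1 :=
    Stmt9Aux.torsion_hom_trivial Stmt9Aux.nsmul_pi (α'.comp (MonoidHom.inr A T))
  have hsplit : ∀ z : A × T, α' z = β z.1 := by
    intro z
    have hz : α' z = α' (z.1, 1) * α' (1, z.2) := by
      rw [← map_mul]
      congr 1
      simp
    rw [hz, hTA, mul_one]
    rfl
  have hαs : Function.Surjective α := by
    intro y
    obtain ⟨w, hw⟩ := hp y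
    obtain ⟨g, hg⟩ := hθ w
    exact ⟨Abelianization.of g, by rw [hαdef, Abelianization.lift_apply_of, MonoidHom.comp_apply, hg, hw]⟩
  have hβs : Function.Surjective β := by
    intro y
    obtain ⟨x, hx⟩ := hαs y
    refine ⟨(e x).1, ?_⟩
    rw [← hsplit (e x), hα'def, MonoidHom.comp_apply]
    simpa using hx
  set b : (Fin n → ℤ) →+ (Fin n → ℤ) :=
    { toFun := fun v => toAdd (β (ofAdd v))
      map_zero' := by
        show toAdd (β (ofAdd 0)) = 0
        rw [ofAdd_zero, map_one, toAdd_one]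
      map_add' := fun v w => by
        show toAdd (β (ofAdd (v + w))) = toAdd (β (ofAdd v)) + toAdd (β (ofAdd w))
        rw [ofAdd_add, map_mul, toAdd_mul] }
    with hbdef
  have hbs : Function.Surjective b := by
    intro v
    obtain ⟨y, hy⟩ := hβs (ofAdd v)
    exact ⟨toAdd y, by simp [hbdef, hy]⟩
  have hbi : Function.Injective b := by
    have := OrzechProperty.injective_of_surjective_endomorphism
      (R := ℤ) (M := Fin n → ℤ) b.toIntLinearMap hbs
    exact this
  have hβi : Function.Injective β := by
    intro x y hxy
    have : b (toAdd x) = b (toAdd y) := by simp [hbdef, hxy]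
    have := hbi this
    rw [← ofAdd_toAdd x, ← ofAdd_toAdd y, this]
  set βe : A ≃* A := MulEquiv.ofBijective β ⟨hβi, hβs⟩ with hβe
  set χ' : A × T →* Multiplicative ℤ := (Abelianization.lift χ).comp e.symm.toMonoidHom with hχ'def
  set γ : A →* Multiplicative ℤ := χ'.comp (MonoidHom.inl A T) with hγdef
  have hTZ : ∀ t : T, χ' (1, t) = 1 :=
    Stmt9Aux.torsion_hom_trivial Stmt9Aux.nsmul_int (χ'.comp (MonoidHom.inr A T))
  have hsplit2 : ∀ z : A × T, χ' z = γ z.1 := by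
    intro z
    have hz : χ' z = χ' (z.1, 1) * χ' (1, z.2) := by
      rw [← map_mul]
      congr 1
      simp
    rw [hz, hTZ, mul_one]
    rfl
  set ψ : FreeGroup (Fin n) →* Multiplicative ℤ := (γ.comp βe.symm.toMonoidHom).comp p with hψdef
  have hkey : ∀ g : G, ψ (θ g) = χ g := by
    intro g
    have h1 : p (θ g) = β (e (Abelianization.of g)).1 := by
      have ha : p (θ g) = α (Abelianization.of g) := by
        rw [hαdef, Abelianization.lift_apply_of]; rfl
      have hb : α (Abelianization.of g) = α' (e (Abelianization.of g)) := by
        rw [hα'def, MonoidHom.comp_apply]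
        simp
      rw [ha, hb, hsplit]
    have h2 : βe.symm (p (θ g)) = (e (Abelianization.of g)).1 := by
      rw [h1]
      have : β (e (Abelianization.of g)).1 = βe (e (Abelianization.of g)).1 := rfl
      rw [this, MulEquiv.symm_apply_apply]
    show γ (βe.symm (p (θ g))) = χ g
    rw [h2, ← hsplit2]
    show (Abelianization.lift χ) (e.symm (e (Abelianization.of g))) = χ g
    rw [MulEquiv.symm_apply_apply]
    exact Abelianization.lift_apply_of (f := χ) g
  have hψθ : ψ.comp θ = χ := MonoidHom.ext hkey
  have hψs : Function.Surjective ψ := by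
    intro y
    obtain ⟨g, hg⟩ := hχ y
    exact ⟨θ g, by rw [hkey, hg]⟩
  have hkerψ : Subgroup.map θ χ.ker = ψ.ker := by
    rw [← hψθ, show (ψ.comp θ).ker = Subgroup.comap θ ψ.ker from (MonoidHom.comap_ker ψ θ).symm]
    exact Subgroup.map_comap_eq_self_of_surjective hθ _
  have hfg : ψ.ker.FG := by
    obtain ⟨S, hSc⟩ := hker
    refine ⟨S.image θ, ?_⟩
    rw [Finset.coe_image, ← MonoidHom.map_closure, hSc, hkerψ]
  exact Stmt9Aux.ker_not_fg hn ψ hψs hfg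
end

section
/- For n ≥ 2, no surjective homomorphism from the free group F_n onto ℤ has finitely generated kernel. (Equivalently, the BNS invariant of a nonabelian free group of finite rank is empty.) -/
open LaurentPolynomial

noncomputable section Stmt12Aux

/-- Laurent polynomials over ℤ. -/
abbrev Stmt12LL : Type := LaurentPolynomial ℤ

/-- Additive automorphism of `Stmt12LL` given by multiplication by `T m`. -/
def stmt12ShiftA (m : ℤ) : Stmt12LL ≃+ Stmt12LL where
  toFun f := T m * f
  invFun f := T (-m) * f
  left_inv f := by
    show T (-m) * (T m * f) = f
    rw [← mul_assoc, ← T_add]; simp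
  right_inv f := by
    show T m * (T (-m) * f) = f
    rw [← mul_assoc, ← T_add]; simp
  map_add' a b := mul_add _ _ _

/-- The shift action of ℤ on Laurent polynomials, multiplicatively. -/
def stmt12Shift : Multiplicative ℤ →* MulAut (Multiplicative Stmt12LL) where
  toFun m := AddEquiv.toMultiplicative (stmt12ShiftA m.toAdd)
  map_one' := by
    ext f : 1
    show Multiplicative.ofAdd (T (0 : ℤ) * f.toAdd) = f
    simp
  map_mul' a b := by
    ext f : 1
    show Multiplicative.ofAdd (T (a.toAdd + b.toAdd) * f.toAdd)
      = Multiplicative.ofAdd (T a.toAdd * (T b.toAdd * f.toAdd))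
    rw [T_add, mul_assoc]

lemma stmt12Shift_apply (m : ℤ) (x : Multiplicative Stmt12LL) :
    stmt12Shift (Multiplicative.ofAdd m) x = Multiplicative.ofAdd (T m * x.toAdd) := rfl

variable {n : ℕ}

/-- The homomorphism from the free group to ℤ[t,t⁻¹] ⋊ ℤ. -/
def stmt12Psi (χ : FreeGroup (Fin n) →* Multiplicative ℤ)
    (p : Fin n → Multiplicative Stmt12LL) :
    FreeGroup (Fin n) →* Multiplicative Stmt12LL ⋊[stmt12Shift] Multiplicative ℤ :=
  FreeGroup.lift fun k => ⟨p k, χ (FreeGroup.of k)⟩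

lemma stmt12Psi_right (χ : FreeGroup (Fin n) →* Multiplicative ℤ)
    (p : Fin n → Multiplicative Stmt12LL) (g : FreeGroup (Fin n)) :
    (stmt12Psi χ p g).right = χ g := by
  have : SemidirectProduct.rightHom.comp (stmt12Psi χ p) = χ := by
    apply FreeGroup.ext_hom
    intro a
    simp [stmt12Psi, SemidirectProduct.rightHom]
  exact DFunLike.congr_fun this g

/-- The restriction of `stmt12Psi` to the kernel of χ, valued in Laurent polynomials. -/
def stmt12Beta (χ : FreeGroup (Fin n) →* Multiplicative ℤ)
    (p : Fin n → Multiplicative Stmt12LL) : χ.ker →* Multiplicative Stmt12LL where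
  toFun g := (stmt12Psi χ p (g : FreeGroup (Fin n))).left
  map_one' := by simp
  map_mul' a b := by
    show (stmt12Psi χ p ((a : FreeGroup (Fin n)) * b)).left = _
    rw [map_mul, SemidirectProduct.mul_left, stmt12Psi_right, a.2]
    simp

lemma stmt12Psi_conj (χ : FreeGroup (Fin n) →* Multiplicative ℤ)
    (p : Fin n → Multiplicative Stmt12LL) (u g : FreeGroup (Fin n)) (hg : g ∈ χ.ker) :
    (stmt12Psi χ p (u * g * u⁻¹)).left = stmt12Shift (χ u) (stmt12Psi χ p g).left := by
  have hg1 : (stmt12Psi χ p g).right = 1 := by rw [stmt12Psi_right]; exact hg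
  rw [map_mul, map_mul, map_inv, SemidirectProduct.mul_left, SemidirectProduct.mul_left,
    SemidirectProduct.inv_left, SemidirectProduct.mul_right, hg1, stmt12Psi_right]
  simp only [mul_one, map_inv]
  set a := (stmt12Psi χ p u).left
  set b := (stmt12Psi χ p g).left
  set x := χ u
  show a * stmt12Shift x b * ((stmt12Shift x) ((stmt12Shift x)⁻¹ a))⁻¹ = stmt12Shift x b
  rw [MulAut.apply_inv_self]
  rw [mul_comm a (stmt12Shift x b), mul_assoc, mul_inv_cancel, mul_one]

/-- Augmentation ring homomorphism ℤ[t,t⁻¹] → ℤ sending T to 1. -/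
def stmt12Eps : Stmt12LL →+* ℤ :=
  AddMonoidAlgebra.liftNCRingHom (RingHom.id ℤ) 1 fun _ _ => Commute.all _ _

lemma stmt12Eps_T (m : ℤ) : stmt12Eps (T m) = 1 := by
  show AddMonoidAlgebra.liftNC _ _ (AddMonoidAlgebra.single m (1 : ℤ)) = 1
  rw [AddMonoidAlgebra.liftNC_single]
  simp

lemma stmt12Eps_T_mul (m : ℤ) (f : Stmt12LL) : stmt12Eps (T m * f) = stmt12Eps f := by
  rw [map_mul, stmt12Eps_T, one_mul]

/-- Projection of the semidirect product to ℤ × ℤ via the augmentation. -/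
def stmt12Theta : (Multiplicative Stmt12LL ⋊[stmt12Shift] Multiplicative ℤ) →*
    Multiplicative ℤ × Multiplicative ℤ where
  toFun g := (Multiplicative.ofAdd (stmt12Eps g.left.toAdd), g.right)
  map_one' := by
    have : ((1 : Multiplicative Stmt12LL ⋊[stmt12Shift] Multiplicative ℤ)).left = 1 := rfl
    simp [this]
  map_mul' a b := by
    have h : (a * b).left = a.left * stmt12Shift a.right b.left := rfl
    have h2 : (a * b).right = a.right * b.right := rfl
    ext
    · show (stmt12Eps ((a * b).left).toAdd) = stmt12Eps a.left.toAdd + stmt12Eps b.left.toAdd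
      rw [h]
      have : (a.left * stmt12Shift a.right b.left).toAdd
          = a.left.toAdd + T a.right.toAdd * b.left.toAdd := rfl
      rw [this, map_add, stmt12Eps_T_mul]
    · exact congrArg Multiplicative.toAdd h2

/-- Main lemma: if some element of the kernel has nontrivial Laurent part, the kernel
is not finitely generated. -/
lemma stmt12_key (χ : FreeGroup (Fin n) →* Multiplicative ℤ) (hχ : Function.Surjective χ)
    (p : Fin n → Multiplicative Stmt12LL) (w : FreeGroup (Fin n)) (hw : w ∈ χ.ker)
    (hq : (stmt12Psi χ p w).left ≠ 1) : ¬ χ.ker.FG := by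
  intro hFG
  have hg1 : Group.FG χ.ker := (Group.fg_iff_subgroup_fg _).mpr hFG
  set β := stmt12Beta χ p with hβ
  have hg2 : Group.FG β.range := Group.fg_of_surjective β.rangeRestrict_surjective
  obtain ⟨S, hS⟩ := (Group.fg_iff_subgroup_fg _).mp hg2
  set B : Finset ℤ := S.sup fun x => x.toAdd.coeff.support with hB
  have hsupp : ∀ x ∈ β.range, x.toAdd.coeff.support ⊆ B := by
    intro x hx
    rw [← hS] at hx
    induction hx using Subgroup.closure_induction with
    | mem y hy => exact Finset.le_sup (f := fun x : Multiplicative Stmt12LL => x.toAdd.coeff.support) hy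
    | one => simp
    | mul a b _ _ ha hb =>
      have : (a * b).toAdd.coeff = a.toAdd.coeff + b.toAdd.coeff := rfl
      rw [this]
      exact (Finsupp.support_add).trans (Finset.union_subset ha hb)
    | inv a _ ha =>
      have : (a⁻¹).toAdd.coeff = -a.toAdd.coeff := rfl
      rw [this, Finsupp.support_neg]
      exact ha
  have hinv : ∀ (m : ℤ), ∀ x ∈ β.range,
      Multiplicative.ofAdd (T m * x.toAdd) ∈ β.range := by
    rintro m x ⟨⟨g, hg⟩, rfl⟩
    obtain ⟨u, hu⟩ := hχ (Multiplicative.ofAdd m)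
    have hmem : u * g * u⁻¹ ∈ χ.ker := by
      rw [MonoidHom.mem_ker] at hg ⊢
      rw [map_mul, map_mul, map_inv, hg, mul_one, mul_inv_cancel]
    refine ⟨⟨u * g * u⁻¹, hmem⟩, ?_⟩
    show (stmt12Psi χ p (u * g * u⁻¹)).left = _
    rw [stmt12Psi_conj χ p u g hg, hu, stmt12Shift_apply]
    rfl
  set q : Stmt12LL := (stmt12Psi χ p w).left.toAdd with hqdef
  have hq0 : q ≠ 0 := by
    intro h
    apply hq
    have : (stmt12Psi χ p w).left = Multiplicative.ofAdd q := rfl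
    rw [this, h]
    rfl
  obtain ⟨d, hd⟩ := Finsupp.support_nonempty_iff.mpr (AddMonoidAlgebra.coeff_eq_zero.not.mpr hq0)
  have hqd : q.coeff d ≠ 0 := Finsupp.mem_support_iff.mp hd
  have hmem : ∀ m : ℤ, (m + d) ∈ B := by
    intro m
    have h1 : Multiplicative.ofAdd (T m * q) ∈ β.range := hinv m _ ⟨⟨w, hw⟩, rfl⟩
    have h2 := hsupp _ h1
    apply h2
    have h3 : (Multiplicative.ofAdd (T m * q)).toAdd = T m * q := rfl
    rw [h3, Finsupp.mem_support_iff]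
    show ((T m * q : AddMonoidAlgebra ℤ ℤ)).coeff (m + d) ≠ 0
    have h4 : ((T m * q : AddMonoidAlgebra ℤ ℤ)).coeff (m + d) = 1 * q.coeff (-m + (m + d)) :=
      AddMonoidAlgebra.coeff_single_mul_apply q (1 : ℤ) m (m + d)
    rw [h4]
    simpa using hqd
  have hBne : B.Nonempty := ⟨0 + d, hmem 0⟩
  have h5 := hmem (B.max' hBne + 1 - d)
  have h6 := Finset.le_max' B _ h5
  omega

end Stmt12Aux

/-- For n ≥ 2 no surjection from the free group Fₙ onto ℤ has finitely
generated kernel. -/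
theorem stmt_12 (n : ℕ) (hn : 2 ≤ n)
    (χ : FreeGroup (Fin n) →* Multiplicative ℤ)
    (hχ : Function.Surjective χ) : ¬ χ.ker.FG := by
  by_cases h : ∃ i, χ (FreeGroup.of i) = 1
  · obtain ⟨i, hi⟩ := h
    apply stmt12_key χ hχ (fun k => if k = i then Multiplicative.ofAdd (1 : Stmt12LL) else 1)
      (FreeGroup.of i) hi
    have : (stmt12Psi χ (fun k => if k = i then Multiplicative.ofAdd (1 : Stmt12LL) else 1)
        (FreeGroup.of i)).left = Multiplicative.ofAdd (1 : Stmt12LL) := by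
      rw [stmt12Psi, FreeGroup.lift_apply_of]
      simp
    rw [this]
    intro hcon
    have : (1 : Stmt12LL) = 0 := congrArg Multiplicative.toAdd hcon
    exact one_ne_zero this
  · push_neg at h
    have h0 : (0 : ℕ) < n := by omega
    have h1 : (1 : ℕ) < n := by omega
    set i0 : Fin n := ⟨0, h0⟩
    set i1 : Fin n := ⟨1, h1⟩
    set c0 : ℤ := (χ (FreeGroup.of i0)).toAdd with hc0
    set c1 : ℤ := (χ (FreeGroup.of i1)).toAdd with hc1
    have hc1ne : c1 ≠ 0 := by
      intro hcon
      apply h i1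
      have : χ (FreeGroup.of i1) = Multiplicative.ofAdd c1 := rfl
      rw [this, hcon]
      rfl
    set p : Fin n → Multiplicative Stmt12LL :=
      fun k => if k = i0 then Multiplicative.ofAdd (1 : Stmt12LL) else 1 with hp
    set w : FreeGroup (Fin n) := (FreeGroup.of i0) ^ (-c1) * (FreeGroup.of i1) ^ c0 with hwdef
    have hne : i1 ≠ i0 := by
      intro hcon
      have := congrArg Fin.val hcon
      simp [i0, i1] at this
    have hwk : w ∈ χ.ker := by
      rw [MonoidHom.mem_ker, hwdef, map_mul, map_zpow, map_zpow]
      have e0 : χ (FreeGroup.of i0) = Multiplicative.ofAdd c0 := rfl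
      have e1 : χ (FreeGroup.of i1) = Multiplicative.ofAdd c1 := rfl
      rw [e0, e1, ← ofAdd_zsmul, ← ofAdd_zsmul, ← ofAdd_add]
      have : -c1 • c0 + c0 • c1 = 0 := by
        simp [smul_eq_mul]; ring
      rw [this]
      rfl
    apply stmt12_key χ hχ p w hwk
    intro hcon
    -- compute the first component of stmt12Theta applied to stmt12Psi w
    have hfst : (stmt12Theta (stmt12Psi χ p w)).1 = Multiplicative.ofAdd (-c1) := by
      have key : (stmt12Theta (stmt12Psi χ p w)).1
          = ((MonoidHom.fst _ _).comp (stmt12Theta.comp (stmt12Psi χ p))) w := rfl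
      rw [key, hwdef, map_mul, map_zpow, map_zpow]
      have e0 : ((MonoidHom.fst _ _).comp (stmt12Theta.comp (stmt12Psi χ p)))
          (FreeGroup.of i0) = Multiplicative.ofAdd (1 : ℤ) := by
        show (stmt12Theta (stmt12Psi χ p (FreeGroup.of i0))).1 = _
        rw [stmt12Psi, FreeGroup.lift_apply_of]
        show Multiplicative.ofAdd (stmt12Eps (p i0).toAdd) = Multiplicative.ofAdd (1 : ℤ)
        have : (p i0).toAdd = (1 : Stmt12LL) := by simp [hp]
        rw [this, map_one]
      have e1 : ((MonoidHom.fst _ _).comp (stmt12Theta.comp (stmt12Psi χ p)))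
          (FreeGroup.of i1) = Multiplicative.ofAdd (0 : ℤ) := by
        show (stmt12Theta (stmt12Psi χ p (FreeGroup.of i1))).1 = _
        rw [stmt12Psi, FreeGroup.lift_apply_of]
        show Multiplicative.ofAdd (stmt12Eps (p i1).toAdd) = Multiplicative.ofAdd (0 : ℤ)
        have : (p i1).toAdd = (0 : Stmt12LL) := by simp [hp, hne]
        rw [this, map_zero]
      rw [e0, e1, ← ofAdd_zsmul, ← ofAdd_zsmul, ← ofAdd_add]
      simp
    have hfst2 : (stmt12Theta (stmt12Psi χ p w)).1 = 1 := by
      show Multiplicative.ofAdd (stmt12Eps (stmt12Psi χ p w).left.toAdd) = 1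
      rw [hcon]
      show Multiplicative.ofAdd (stmt12Eps 0) = 1
      rw [map_zero]
      rfl
    rw [hfst] at hfst2
    have : -c1 = 0 := congrArg Multiplicative.toAdd hfst2
    omega
end

section
/- A nonabelian free group contains no nontrivial finitely generated subgroup that is normal and of infinite index; consequently, a nonabelian free group is not isomorphic to a semidirect product K ⋊ ℤ with K nontrivial and finitely generated. -/
set_option linter.unusedSectionVars false

namespace Greenberg19
open FreeGroup List

variable {α : Type*} [DecidableEq α]


/-- A word is reduced: no adjacent cancelling pair. -/
def RedW (L : List (α × Bool)) : Prop :=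
  List.Chain' (fun a b : α × Bool => ¬(b.1 = a.1 ∧ b.2 = !a.2)) L

lemma redW_reduce_eq : ∀ {L : List (α × Bool)}, RedW L → FreeGroup.reduce L = L
  | [], _ => rfl
  | [x], _ => rfl
  | x :: y :: L, h => by
    have h1 : ¬(y.1 = x.1 ∧ y.2 = !x.2) := (List.isChain_cons_cons.1 h).1
    have h2 : FreeGroup.reduce (y :: L) = y :: L := redW_reduce_eq (List.isChain_cons_cons.1 h).2
    rw [FreeGroup.reduce.cons, h2]
    simp only []
    rw [if_neg (by simpa [eq_comm] using h1)]

lemma reduce_eq_redW : ∀ {L : List (α × Bool)}, FreeGroup.reduce L = L → RedW L := by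
  intro L
  induction L with
  | nil => intro _; exact List.isChain_nil
  | cons x L ih =>
    intro h
    rw [FreeGroup.reduce.cons] at h
    rcases hL : FreeGroup.reduce L with _ | ⟨hd, tl⟩
    · rw [hL] at h
      simp at h
      subst h
      exact List.isChain_singleton x
    · rw [hL] at h
      replace h : (if x.1 = hd.1 ∧ x.2 = !hd.2 then tl else x :: hd :: tl) = x :: L := h
      by_cases hc : x.1 = hd.1 ∧ x.2 = !hd.2
      · rw [if_pos hc] at h
        exfalso
        have := congrArg List.length h
        have hle := FreeGroup.Red.length_le (FreeGroup.reduce.red (L := L))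
        rw [hL] at hle
        simp at this hle
        omega
      · rw [if_neg hc] at h
        have : hd :: tl = L := by simpa using h
        rw [this] at hL
        have hR := ih hL
        rw [← this] at hR ⊢
        exact List.isChain_cons_cons.2 ⟨by simpa [eq_comm] using hc, hR⟩

lemma redW_toWord (x : FreeGroup α) : RedW x.toWord := reduce_eq_redW x.reduce_toWord

lemma toWord_mk_eq {L : List (α × Bool)} (h : RedW L) : (FreeGroup.mk L).toWord = L := by
  rw [FreeGroup.toWord_mk, redW_reduce_eq h]

lemma RedW.append_left {L₁ L₂ : List (α × Bool)} (h : RedW (L₁ ++ L₂)) : RedW L₁ :=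
  (List.isChain_append.1 h).1

lemma RedW.append_right {L₁ L₂ : List (α × Bool)} (h : RedW (L₁ ++ L₂)) : RedW L₂ :=
  (List.isChain_append.1 h).2.1

lemma redW_append {L₁ L₂ : List (α × Bool)} (h₁ : RedW L₁) (h₂ : RedW L₂)
    (hj : ∀ a ∈ L₁.getLast?, ∀ b ∈ L₂.head?, ¬(b.1 = a.1 ∧ b.2 = !a.2)) :
    RedW (L₁ ++ L₂) := List.isChain_append.2 ⟨h₁, h₂, hj⟩

/-- Cancellation lemma for multiplying two reduced words. -/
lemma reduce_append_cancel :
    ∀ (L₁ L₂ : List (α × Bool)), RedW L₁ → RedW L₂ →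
      ∃ p c q, L₁ = p ++ c ∧ L₂ = invRev c ++ q ∧
        FreeGroup.reduce (L₁ ++ L₂) = p ++ q := by
  intro L₁
  induction L₁ using List.reverseRecOn with
  | nil =>
    intro L₂ _ h₂
    exact ⟨[], [], L₂, by simp [invRev], by simp [invRev], by simpa using redW_reduce_eq h₂⟩
  | append_singleton M a ih =>
    intro L₂ h₁ h₂
    rcases L₂ with _ | ⟨b, T⟩
    · exact ⟨M ++ [a], [], [], by simp [invRev], by simp [invRev],
        by simpa using redW_reduce_eq h₁⟩
    · by_cases hc : b.1 = a.1 ∧ b.2 = !a.2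
      · -- cancellation at the junction
        have hM : RedW M := h₁.append_left
        have hT : RedW T := (h₂ : RedW (b :: T)).append_right (L₁ := [b])
        obtain ⟨p, c, q, e1, e2, e3⟩ := ih T hM hT
        refine ⟨p, c ++ [a], q, by rw [← List.append_assoc, ← e1], ?_, ?_⟩
        · have hb : b = (a.1, !a.2) := by
            obtain ⟨x, s⟩ := a; obtain ⟨y, t⟩ := b
            simp_all
          rw [hb, e2]
          simp [invRev]
        · have hstep : Red.Step ((M ++ [a]) ++ (b :: T)) (M ++ T) := by
            have hb : b = (a.1, !a.2) := by
              obtain ⟨x, s⟩ := a; obtain ⟨y, t⟩ := b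
              simp_all
            have : (M ++ [a]) ++ (b :: T) = M ++ (a.1, a.2) :: (a.1, !a.2) :: T := by
              simp [hb]
            rw [this]
            exact Red.Step.not
          rw [FreeGroup.reduce.Step.eq hstep, e3]
      · -- no cancellation: everything already reduced
        have : RedW ((M ++ [a]) ++ (b :: T)) := by
          refine redW_append h₁ h₂ ?_
          intro x hx y hy
          simp at hx hy
          subst hx; subst hy
          exact hc
        exact ⟨M ++ [a], [], b :: T, by simp [invRev], by simp [invRev],
          by rw [redW_reduce_eq this]⟩

lemma invRev_append' (L₁ L₂ : List (α × Bool)) :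
    invRev (L₁ ++ L₂) = invRev L₂ ++ invRev L₁ := by simp [invRev]

lemma mk_invRev (L : List (α × Bool)) : FreeGroup.mk (invRev L) = (FreeGroup.mk L)⁻¹ :=
  (FreeGroup.inv_mk).symm

lemma prefix_mem_coset (S : Set (FreeGroup α)) :
    ∀ x ∈ Subgroup.closure S, ∀ p, p <+: x.toWord →
      ∃ k ∈ Subgroup.closure S, ∃ t,
        (t = [] ∨ ∃ s ∈ S, t <+: s.toWord ∨ t <+: s⁻¹.toWord) ∧
        FreeGroup.mk p = k * FreeGroup.mk t := by
  intro x hx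
  induction hx using Subgroup.closure_induction with
  | mem s hs =>
    intro p hp
    exact ⟨1, one_mem _, p, Or.inr ⟨s, hs, Or.inl hp⟩, by rw [one_mul]⟩
  | one =>
    intro p hp
    rw [FreeGroup.toWord_one, List.prefix_nil] at hp
    exact ⟨1, one_mem _, [], Or.inl rfl, by rw [hp, one_mul]⟩
  | mul x y hxc hyc hx hy =>
    intro p hp
    have hw : (x * y).toWord = FreeGroup.reduce (x.toWord ++ y.toWord) := by
      conv_lhs => rw [← FreeGroup.mk_toWord (x := x), ← FreeGroup.mk_toWord (x := y)]
      rw [FreeGroup.mul_mk, FreeGroup.toWord_mk]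
    obtain ⟨p₁, c, q₁, e1, e2, e3⟩ :=
      reduce_append_cancel x.toWord y.toWord (redW_toWord x) (redW_toWord y)
    rw [hw, e3] at hp
    obtain ⟨r, hr⟩ := hp
    rcases List.append_eq_append_iff.1 hr with ⟨a, ha1, _⟩ | ⟨a, ha1, ha2⟩
    · -- p₁ = p ++ a : p is a prefix of x.toWord
      exact hx p (by rw [e1, ha1]; exact ⟨a ++ c, by simp⟩)
    · -- p = p₁ ++ a, q₁ = a ++ r
      have haq : invRev c ++ a <+: y.toWord := by
        rw [e2]; exact ⟨r, by rw [List.append_assoc, ← ha2]⟩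
      obtain ⟨k, hk, t, ht, hkt⟩ := hy (invRev c ++ a) haq
      refine ⟨x * k, mul_mem hxc hk, t, ht, ?_⟩
      have hxeq : x = FreeGroup.mk p₁ * FreeGroup.mk c := by
        conv_lhs => rw [← FreeGroup.mk_toWord (x := x), e1, ← FreeGroup.mul_mk]
      calc FreeGroup.mk p = FreeGroup.mk p₁ * FreeGroup.mk a := by
            rw [ha1, ← FreeGroup.mul_mk]
        _ = x * ((FreeGroup.mk c)⁻¹ * FreeGroup.mk a) := by rw [hxeq]; group
        _ = x * (k * FreeGroup.mk t) := by
            rw [← hkt, ← FreeGroup.mul_mk, mk_invRev]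
        _ = x * k * FreeGroup.mk t := by rw [mul_assoc]
  | inv x hxc hx =>
    intro p hp
    rw [FreeGroup.toWord_inv] at hp
    obtain ⟨r, hr⟩ := hp
    have hxw : x.toWord = invRev r ++ invRev p := by
      have := congrArg invRev hr
      rw [FreeGroup.invRev_invRev, invRev_append'] at this
      exact this.symm
    obtain ⟨k, hk, t, ht, hkt⟩ := hx (invRev r) ⟨invRev p, hxw.symm⟩
    refine ⟨x⁻¹ * k, mul_mem (inv_mem hxc) hk, t, ht, ?_⟩
    have hxeq : x = FreeGroup.mk (invRev r) * FreeGroup.mk (invRev p) := by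
      conv_lhs => rw [← FreeGroup.mk_toWord (x := x), hxw, ← FreeGroup.mul_mk]
    calc FreeGroup.mk p = (FreeGroup.mk (invRev p))⁻¹ := by
          rw [← mk_invRev, FreeGroup.invRev_invRev]
      _ = x⁻¹ * FreeGroup.mk (invRev r) := by rw [hxeq]; group
      _ = x⁻¹ * k * FreeGroup.mk t := by rw [hkt, mul_assoc]

lemma invRev_replicate (n : ℕ) (x : α) (b : Bool) :
    invRev (List.replicate n (x, b)) = List.replicate n (x, !b) := by
  simp [invRev]

lemma prefix_replicate {p : List α} {n : ℕ} {x : α} (h : p <+: List.replicate n x) :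
    p = List.replicate p.length x :=
  List.eq_replicate_iff.2 ⟨rfl, fun b hb => List.eq_of_mem_replicate (h.sublist.mem hb)⟩

lemma suffix_replicate {p : List α} {n : ℕ} {x : α} (h : p <:+ List.replicate n x) :
    p = List.replicate p.length x :=
  List.eq_replicate_iff.2 ⟨rfl, fun b hb => List.eq_of_mem_replicate (h.sublist.mem hb)⟩

/-- Conjugating a nontrivial element by a high power of a generator `c'`
gives an element whose reduced word begins and ends with base letter `c'`. -/
lemma exists_conj_word (u : FreeGroup α) (hu : u ≠ 1) (c' : α) :
    ∃ Y : FreeGroup α, (Y * u * Y⁻¹).toWord ≠ [] ∧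
      (∀ h ∈ (Y * u * Y⁻¹).toWord.head?, h.1 = c') ∧
      (∀ h ∈ (Y * u * Y⁻¹).toWord.getLast?, h.1 = c') := by
  classical
  set n : ℕ := u.toWord.length + 1 with hn
  have hun : u.toWord.length = n - 1 := by omega
  set Y : FreeGroup α := FreeGroup.of c' ^ n with hY
  have hYw : Y.toWord = List.replicate n (c', true) := FreeGroup.toWord_of_pow c' n
  have hYiw : Y⁻¹.toWord = List.replicate n (c', false) := by
    rw [FreeGroup.toWord_inv, hYw, invRev_replicate, Bool.not_true]
  -- Step 1: reduced word of Y * u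
  obtain ⟨p, c, q, e1, e2, e3⟩ :=
    reduce_append_cancel Y.toWord u.toWord (redW_toWord Y) (redW_toWord u)
  have hVw : (Y * u).toWord = p ++ q := by
    conv_lhs => rw [← FreeGroup.mk_toWord (x := Y), ← FreeGroup.mk_toWord (x := u),
      FreeGroup.mul_mk]
    rw [FreeGroup.toWord_mk, e3]
  have hclen : c.length ≤ n - 1 := by
    have := congrArg List.length e2
    simp [invRev] at this
    omega
  have hplen : p.length = n - c.length := by
    have h' : (List.replicate n (c', true)).length = (p ++ c).length := by rw [← hYw, ← e1]
    simp at h'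
    omega
  have hppos : 0 < p.length := by omega
  have hprep : p = List.replicate p.length (c', true) :=
    prefix_replicate (by rw [hYw] at e1; exact ⟨c, e1.symm⟩)
  -- Step 2: reduced word of (Y * u) * Y⁻¹
  obtain ⟨P, C, Q, E1, E2, E3⟩ :=
    reduce_append_cancel (Y * u).toWord Y⁻¹.toWord (redW_toWord (Y * u))
      (redW_toWord Y⁻¹)
  have hWw : (Y * u * Y⁻¹).toWord = P ++ Q := by
    conv_lhs => rw [← FreeGroup.mk_toWord (x := Y * u), ← FreeGroup.mk_toWord (x := Y⁻¹),
      FreeGroup.mul_mk]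
    rw [FreeGroup.toWord_mk, E3]
  have hQrep : Q = List.replicate Q.length (c', false) :=
    suffix_replicate (n := n) (by rw [hYiw] at E2; exact ⟨invRev C, E2.symm⟩)
  have hWne : (Y * u * Y⁻¹).toWord ≠ [] := by
    rw [Ne, FreeGroup.toWord_eq_nil_iff]
    intro h
    apply hu
    have : Y⁻¹ * (Y * u * Y⁻¹) * Y = u := by group
    rw [h] at this
    simpa using this.symm
  have hPQne : P ++ Q ≠ [] := by rw [← hWw]; exact hWne
  refine ⟨Y, hWne, ?_, ?_⟩
  · -- head
    rw [hWw]
    rcases hP : P with _ | ⟨h₀, Pt⟩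
    · subst hP
      simp only [List.nil_append]
      intro h hh
      rw [hQrep] at hh
      rcases hQl : Q.length with _ | m
      · rw [hQrep, hQl] at hPQne; simp at hPQne
      · rw [hQl, List.replicate_succ] at hh
        simp at hh
        first | (rw [hh]) | (rw [← hh])
    · intro h hh
      simp only [List.cons_append, List.head?_cons, Option.mem_some_iff] at hh
      subst hh
      -- h₀ is the head of (Y*u).toWord = p ++ q, and p starts with (c', true)
      have hV0 : ((Y * u).toWord).head? = some (c', true) := by
        rw [hVw, hprep]
        rcases hpl : p.length with _ | m
        · omega
        · rw [List.replicate_succ]; rfl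
      have : ((Y * u).toWord).head? = some h₀ := by rw [E1, hP]; rfl
      rw [hV0] at this
      simp at this
      first | (rw [this]) | (rw [← this])
  · -- last
    rw [hWw]
    rcases hQ0 : Q with _ | ⟨q₀, Qt⟩
    · -- Q = [] : total cancellation of Y⁻¹ into (Y*u).toWord
      subst hQ0
      have hC : invRev C = List.replicate n (c', false) := by
        rw [hYiw] at E2; simpa using E2.symm
      have hCrep : C = List.replicate n (c', true) := by
        have := congrArg invRev hC
        rwa [FreeGroup.invRev_invRev, invRev_replicate, Bool.not_false] at this
      -- q is a suffix of replicate n (c',true)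
      have hq_suf : q <:+ (Y * u).toWord := by rw [hVw]; exact ⟨p, rfl⟩
      have hC_suf : List.replicate n (c', true) <:+ (Y * u).toWord := by
        rw [E1, hCrep]; exact ⟨P, rfl⟩
      have hqlen : q.length ≤ n := by
        have := congrArg List.length e2
        simp [invRev] at this
        omega
      have hqrep : q = List.replicate q.length (c', true) :=
        suffix_replicate (List.suffix_of_suffix_length_le hq_suf hC_suf (by simpa using hqlen))
      have hVrep : (Y * u).toWord = List.replicate (p.length + q.length) (c', true) := by
        rw [hVw]
        conv_lhs => rw [hprep, hqrep]
        rw [← List.replicate_add]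
      have hPrep : P = List.replicate P.length (c', true) :=
        prefix_replicate (by rw [hVrep] at E1; exact ⟨C, E1.symm⟩)
      simp only [List.append_nil]
      intro h hh
      rw [hPrep] at hh
      rcases hPl : P.length with _ | m
      · rw [hPrep, hPl] at hPQne; simp at hPQne
      · rw [hPl, List.replicate_succ'] at hh
        rw [List.getLast?_concat] at hh
        simp at hh
        first | (rw [hh]) | (rw [← hh])
    · intro h hh
      rw [List.getLast?_append] at hh
      have : (q₀ :: Qt).getLast? = some ((q₀ :: Qt).getLast (by simp)) := List.getLast?_eq_getLast (by simp)
      rw [hQ0] at hQrep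
      have hlast : (q₀ :: Qt).getLast? = some (c', false) := by
        rw [hQrep]
        simp only [List.length_cons, List.replicate_succ']
        rw [List.getLast?_concat]
      rw [hlast] at hh
      simp at hh
      first | (rw [hh]) | (rw [← hh])

lemma redW_invRev {L : List (α × Bool)} (h : RedW L) : RedW (invRev L) :=
  reduce_eq_redW (by rw [FreeGroup.reduce_invRev, redW_reduce_eq h])

lemma head?_invRev (L : List (α × Bool)) :
    (invRev L).head? = L.getLast?.map (fun x => (x.1, !x.2)) := by
  rw [invRev, List.head?_reverse, List.getLast?_map]

theorem greenberg (K : Subgroup (FreeGroup α)) [Nontrivial α] (hN : K.Normal) (hFG : K.FG)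
    (hidx : K.index = 0) : K = ⊥ := by
  by_contra hbot
  obtain ⟨⟨u, huK⟩, hu1⟩ := Subgroup.ne_bot_iff_exists_ne_one.1 hbot
  have hu : u ≠ 1 := by simpa [Subtype.ext_iff] using hu1
  obtain ⟨S, hS⟩ := hFG
  set T : Set (List (α × Bool)) :=
    {t | t = [] ∨ ∃ s ∈ (S : Set (FreeGroup α)), t <+: s.toWord ∨ t <+: s⁻¹.toWord} with hT
  have hTfin : T.Finite := by
    have : T ⊆ {([] : List (α × Bool))} ∪
        ⋃ s ∈ (S : Set (FreeGroup α)), ({t | t ∈ s.toWord.inits} ∪ {t | t ∈ s⁻¹.toWord.inits}) := by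
      rintro t (rfl | ⟨s, hs, h | h⟩)
      · exact Or.inl rfl
      · exact Or.inr (Set.mem_biUnion hs (Or.inl ((List.mem_inits _ _).2 h)))
      · exact Or.inr (Set.mem_biUnion hs (Or.inr ((List.mem_inits _ _).2 h)))
    refine Set.Finite.subset ?_ this
    refine (Set.finite_singleton _).union (Set.Finite.biUnion S.finite_toSet ?_)
    intro s _
    exact (List.finite_toSet _).union (List.finite_toSet _)
  -- every coset of K has a representative in T
  have main : ∀ g : FreeGroup α, ∃ t ∈ T,
      (QuotientGroup.mk (FreeGroup.mk t) : FreeGroup α ⧸ K) = QuotientGroup.mk g := by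
    intro g
    by_cases hg : g = 1
    · exact ⟨[], Or.inl rfl, by rw [hg, ← FreeGroup.one_eq_mk]⟩
    · have hGne : g.toWord ≠ [] := fun h => hg (FreeGroup.toWord_eq_nil_iff.1 h)
      set G := g.toWord with hG
      set a := G.getLast hGne with ha
      obtain ⟨c', hc'⟩ := exists_ne a.1
      obtain ⟨Y, hUne, hUhead, hUlast⟩ := exists_conj_word u hu c'
      set u' := Y * u * Y⁻¹ with hu'
      have hu'K : u' ∈ K := hN.conj_mem u huK Y
      set U := u'.toWord with hU
      -- the conjugate g * u' * g⁻¹ has reduced word G ++ U ++ invRev G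
      have hGlast : G.getLast? = some a := List.getLast?_eq_getLast hGne
      have hred : RedW (G ++ (U ++ invRev G)) := by
        refine redW_append (redW_toWord g) ?_ ?_
        · refine redW_append (redW_toWord u') (redW_invRev (redW_toWord g)) ?_
          intro x hx y hy
          rw [head?_invRev, hGlast] at hy
          simp only [Option.map_some, Option.mem_some_iff] at hy
          subst hy
          intro ⟨h1, _⟩
          exact hc' ((hUlast x hx) ▸ h1.symm)
        · intro x hx y hy
          rw [hGlast, Option.mem_some_iff] at hx
          subst hx
          rw [List.head?_append] at hy
          rcases hU0 : U.head? with _ | u₀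
          · exact absurd (List.head?_eq_none_iff.1 hU0) hUne
          · rw [hU0] at hy
            simp only [Option.or, Option.mem_some_iff] at hy
            subst hy
            intro ⟨h1, _⟩
            exact hc' (by rw [← hUhead u₀ hU0]; exact h1)
      have hw_eq : g * u' * g⁻¹ = FreeGroup.mk (G ++ (U ++ invRev G)) := by
        conv_lhs => rw [← FreeGroup.mk_toWord (x := g), ← FreeGroup.mk_toWord (x := u')]
        rw [FreeGroup.inv_mk, FreeGroup.mul_mk, FreeGroup.mul_mk, List.append_assoc]
      have hw_word : (g * u' * g⁻¹).toWord = G ++ (U ++ invRev G) := by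
        rw [hw_eq, toWord_mk_eq hred]
      have hwK : g * u' * g⁻¹ ∈ K := hN.conj_mem u' hu'K g
      rw [← hS] at hwK
      obtain ⟨k, hk, t, ht, hkt⟩ :=
        prefix_mem_coset (S : Set (FreeGroup α)) _ hwK G ⟨U ++ invRev G, hw_word.symm⟩
      rw [FreeGroup.mk_toWord] at hkt
      refine ⟨t, ht, ?_⟩
      rw [QuotientGroup.eq]
      have : (FreeGroup.mk t)⁻¹ * g = (FreeGroup.mk t)⁻¹ * k * ((FreeGroup.mk t)⁻¹)⁻¹ := by
        rw [hkt]; group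
      rw [this]
      exact hN.conj_mem k (hS ▸ hk) _
  -- hence the quotient is finite, contradicting infinite index
  have : Finite (FreeGroup α ⧸ K) := by
    have hsurj : Function.Surjective
        (fun t : T => (QuotientGroup.mk (FreeGroup.mk t.1) : FreeGroup α ⧸ K)) := by
      intro x
      obtain ⟨g, rfl⟩ := QuotientGroup.mk_surjective x
      obtain ⟨t, htT, ht⟩ := main g
      exact ⟨⟨t, htT⟩, ht⟩
    have : Finite T := hTfin
    exact Finite.of_surjective _ hsurj
  exact Subgroup.index_ne_zero_of_finite hidx

theorem part2 {α : Type*} [Nontrivial α] (K : Type) [Group K] (hK : Group.FG K)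
    (φ : Multiplicative ℤ →* MulAut K)
    (h : Nonempty (FreeGroup α ≃* K ⋊[φ] Multiplicative ℤ)) :
    Subsingleton K := by
  classical
  obtain ⟨e⟩ := h
  set N : Subgroup (K ⋊[φ] Multiplicative ℤ) :=
    (SemidirectProduct.rightHom : K ⋊[φ] Multiplicative ℤ →* Multiplicative ℤ).ker with hNdef
  set K' : Subgroup (FreeGroup α) := N.comap e.toMonoidHom with hK'def
  have hNormal : K'.Normal := Subgroup.Normal.comap (MonoidHom.normal_ker _) _
  have hrange : (SemidirectProduct.inl : K →* K ⋊[φ] Multiplicative ℤ).range = N :=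
    SemidirectProduct.range_inl_eq_ker_rightHom
  -- a surjective homomorphism K →* K'
  have hmem : ∀ k : K, (e.symm.toMonoidHom.comp SemidirectProduct.inl) k ∈ K' := by
    intro k
    simp only [hK'def, Subgroup.mem_comap]
    have h2 : e.toMonoidHom ((e.symm.toMonoidHom.comp SemidirectProduct.inl) k) =
        SemidirectProduct.inl k := e.apply_symm_apply _
    rw [h2, ← hrange]
    exact ⟨k, rfl⟩
  set f : K →* K' := (e.symm.toMonoidHom.comp SemidirectProduct.inl).codRestrict K' hmem with hf
  have hfsurj : Function.Surjective f := by
    rintro ⟨x, hx⟩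
    rw [hK'def, Subgroup.mem_comap, ← hrange] at hx
    obtain ⟨k, hk⟩ := hx
    refine ⟨k, ?_⟩
    apply Subtype.ext
    show e.symm (SemidirectProduct.inl k) = x
    rw [hk]
    exact e.symm_apply_apply x
  have hK'fg : K'.FG := by
    rw [← Group.fg_iff_subgroup_fg]
    exact Group.fg_of_surjective hfsurj
  have hK'idx : K'.index = 0 := by
    rw [hK'def, Subgroup.index_comap_of_surjective _ e.surjective, hNdef,
      Subgroup.index_ker]
    have : Function.Surjective (SemidirectProduct.rightHom :
        K ⋊[φ] Multiplicative ℤ →* Multiplicative ℤ) := SemidirectProduct.rightHom_surjective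
    rw [MonoidHom.range_eq_top_of_surjective _ this, Subgroup.card_top]
    exact Nat.card_eq_zero_of_infinite
  have hbot : K' = ⊥ := greenberg K' hNormal hK'fg hK'idx
  -- conclude K is a subsingleton
  have : ∀ k : K, k = 1 := by
    intro k
    have h1 : ((f k : K') : FreeGroup α) ∈ (⊥ : Subgroup (FreeGroup α)) := hbot ▸ (f k).2
    have h2 : (f k : FreeGroup α) = 1 := by simpa [Subgroup.mem_bot] using h1
    have h3 : e.symm (SemidirectProduct.inl k) = 1 := h2
    have h4 : (SemidirectProduct.inl k : K ⋊[φ] Multiplicative ℤ) = 1 := by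
      have := congrArg e h3
      simpa using this
    exact SemidirectProduct.inl_injective (by simpa using h4)
  exact ⟨fun a b => by rw [this a, this b]⟩

end Greenberg19

/-- A nonabelian free group has no nontrivial finitely generated normal
subgroup of infinite index, and hence is not a semidirect product
K ⋊ ℤ with K nontrivial finitely generated. -/
theorem stmt_19 {α : Type*} [Nontrivial α] :
    (∀ K : Subgroup (FreeGroup α), K.Normal → K.FG → K.index = 0 →
      K = ⊥) ∧
    (∀ (K : Type) [Group K], Group.FG K →
      ∀ φ : Multiplicative ℤ →* MulAut K,
        Nonempty (FreeGroup α ≃* K ⋊[φ] Multiplicative ℤ) →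
        Subsingleton K) := by
  classical
  constructor
  · intro K hN hFG hidx
    exact Greenberg19.greenberg K hN hFG hidx
  · intro K _ hK φ h
    exact Greenberg19.part2 K hK φ h
end
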